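/- arXiv:2212.01024 — 6 statements merged into one kernel-verified Lean document; each statement's English description precedes it below -/
import Mathlib

section
/- If a language L over a finite alphabet satisfies a local order condition, then L contains no locally strong bispecial word; that is, for every bispecial word w and all nonempty subsets A' of A(w) and D' of D(w), the number of pairs (a,b) with a in A', b in D', and awb in L is at most #A' + #D' - 1. -/
open List Set

variable {A : Type*}

/-- A (factorial, extendable) language over an alphabet `A`. -/
def IsLanguage (L : Set (List A)) : Prop :=
  (∀ w ∈ L, ∀ v : List A, v <:+: w → v ∈ L) ∧
  (∀ w ∈ L, ∃ a : A, a :: w ∈ L) ∧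
  (∀ w ∈ L, ∃ a : A, w ++ [a] ∈ L)

/-- Arrival set `A(w)`. -/
def arrSet (L : Set (List A)) (w : List A) : Set A := {a | a :: w ∈ L}

/-- Departure set `D(w)`. -/
def depSet (L : Set (List A)) (w : List A) : Set A := {a | w ++ [a] ∈ L}

def Bispecial (L : Set (List A)) (w : List A) : Prop :=
  1 < (arrSet L w).ncard ∧ 1 < (depSet L w).ncard

/-- `m(w) = #{awb ∈ L}`. -/
noncomputable def extCount (L : Set (List A)) (w : List A) : ℕ :=
  {p : A × A | p.1 :: (w ++ [p.2]) ∈ L}.ncard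

def StrongBispecial (L : Set (List A)) (w : List A) : Prop :=
  Bispecial L w ∧ (arrSet L w).ncard + (depSet L w).ncard - 1 < extCount L w

def WeakBispecial (L : Set (List A)) (w : List A) : Prop :=
  Bispecial L w ∧ extCount L w < (arrSet L w).ncard + (depSet L w).ncard - 1

def LocallyStrongBispecial (L : Set (List A)) (w : List A) : Prop :=
  Bispecial L w ∧ ∃ A' D' : Set A, A'.Nonempty ∧ D'.Nonempty ∧
    A' ⊆ arrSet L w ∧ D' ⊆ depSet L w ∧
    A'.ncard + D'.ncard - 1 <
      {p : A × A | p.1 ∈ A' ∧ p.2 ∈ D' ∧ p.1 :: (w ++ [p.2]) ∈ L}.ncard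

/-- The order condition at a single bispecial word, for orders `rA`, `rD`. -/
def OrderConditionAt (L : Set (List A)) (w : List A) (rA rD : A → A → Prop) : Prop :=
  ∀ a b c d : A, a ≠ b → c ≠ d →
    a :: (w ++ [c]) ∈ L → b :: (w ++ [d]) ∈ L → (rA a b ↔ rD c d)

/-- The local order condition. -/
def LocalOrderCondition (L : Set (List A)) : Prop :=
  ∀ w : List A, Bispecial L w → ∃ rA rD : A → A → Prop,
    IsStrictTotalOrder A rA ∧ IsStrictTotalOrder A rD ∧ OrderConditionAt L w rA rD

/-- `a` and `a'` are consecutive in the strict order `r`. -/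
def ConsecutiveIn (r : A → A → Prop) (a a' : A) : Prop :=
  r a a' ∧ ∀ c : A, ¬ (r a c ∧ r c a')

/-- A connection for the bispecial word `w`, with respect to orders `rA`, `rD`. -/
def ConnectionWith (L : Set (List A)) (w : List A) (rA rD : A → A → Prop) : Prop :=
  ∃ a a' b b' : A, ConsecutiveIn rA a a' ∧ ConsecutiveIn rD b b' ∧
    a :: (w ++ [b]) ∈ L ∧ a' :: (w ++ [b']) ∈ L ∧
    a :: (w ++ [b']) ∉ L ∧ a' :: (w ++ [b]) ∉ L

/-- `w` has a connection (for some orders realizing the order condition at `w`). -/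
def HasConnection (L : Set (List A)) (w : List A) : Prop :=
  ∃ rA rD : A → A → Prop, IsStrictTotalOrder A rA ∧ IsStrictTotalOrder A rD ∧
    OrderConditionAt L w rA rD ∧ ConnectionWith L w rA rD

/-- Complexity function `p(n)`. -/
noncomputable def complexityFn (L : Set (List A)) (n : ℕ) : ℕ :=
  {w ∈ L | w.length = n}.ncard

def UniformlyRecurrent (L : Set (List A)) : Prop :=
  ∀ v ∈ L, ∃ n : ℕ, ∀ u ∈ L, u.length = n → v <:+: u

def LangRecurrent (L : Set (List A)) : Prop :=
  ∀ v ∈ L, ∃ u : List A, u ≠ [] ∧ v ++ u ∈ L ∧ v <:+ v ++ u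

def LangAperiodic (L : Set (List A)) : Prop :=
  ∀ w ∈ L, w ≠ [] → ∃ n : ℕ, (List.replicate n w).flatten ∉ L

def LeftSpecial (L : Set (List A)) (w : List A) : Prop := 1 < (arrSet L w).ncard

def RightSpecial (L : Set (List A)) (w : List A) : Prop := 1 < (depSet L w).ncard

/-- The two-sided subshift associated to `L`. -/
def XL (L : Set (List A)) : Set (ℤ → A) :=
  {x | ∀ (m : ℤ) (n : ℕ), (List.ofFn fun i : Fin n => x (m + (i : ℕ))) ∈ L}

def occursAtZ (x : ℤ → A) (m : ℤ) (w : List A) : Prop :=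
  (List.ofFn fun i : Fin w.length => x (m + (i : ℕ))) = w

def FactorsZ (x : ℤ → A) : Set (List A) := {w | ∃ m : ℤ, occursAtZ x m w}

def RightRec (x : ℤ → A) : Prop :=
  ∀ w ∈ FactorsZ x, ∀ N : ℤ, ∃ m : ℤ, N ≤ m ∧ occursAtZ x m w

def LeftRec (x : ℤ → A) : Prop :=
  ∀ w ∈ FactorsZ x, ∀ N : ℤ, ∃ m : ℤ, m ≤ N ∧ occursAtZ x m w

def RecurrentZ (x : ℤ → A) : Prop := RightRec x ∧ LeftRec x

/-- The `F`-flipped order condition, with orders `rA` (arrival) and `rD` (departure):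
the departure order is reversed when the number of `F`-letters of `w` is odd. -/
def FlippedOC [DecidableEq A] (L : Set (List A)) (F : Finset A)
    (rA rD : A → A → Prop) : Prop :=
  ∀ w : List A, Bispecial L w → ∀ a b c d : A, a ≠ b → c ≠ d →
    a :: (w ++ [c]) ∈ L → b :: (w ++ [d]) ∈ L →
    (rA a b ↔ if Even (w.countP fun e => decide (e ∈ F)) then rD c d else rD d c)

/-- A generalized `F`-flipped interval exchange transformation. -/
structure GIET (A : Type*) (F : Finset A) where
  l : A → ℝ
  r : A → ℝ
  T : ℝ → ℝ
  lt : ∀ e, l e < r e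
  sub : ∀ e, Set.Ioo (l e) (r e) ⊆ Set.Ioo (0 : ℝ) 1
  disj : ∀ e f, e ≠ f → Disjoint (Set.Ioo (l e) (r e)) (Set.Ioo (l f) (r f))
  cover : Set.Icc (0 : ℝ) 1 = ⋃ e, Set.Icc (l e) (r e)
  cont : ∀ e, ContinuousOn T (Set.Ioo (l e) (r e))
  inc : ∀ e ∉ F, StrictMonoOn T (Set.Ioo (l e) (r e))
  dec : ∀ e ∈ F, StrictAntiOn T (Set.Ioo (l e) (r e))
  l' : A → ℝ
  r' : A → ℝ
  lt' : ∀ e, l' e < r' e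
  img : ∀ e, T '' Set.Ioo (l e) (r e) = Set.Ioo (l' e) (r' e)
  disj' : ∀ e f, e ≠ f → Disjoint (Set.Ioo (l' e) (r' e)) (Set.Ioo (l' f) (r' f))
  cover' : Set.Icc (0 : ℝ) 1 = ⋃ e, Set.Icc (l' e) (r' e)

variable {F : Finset A}

/-- A bi-infinite orbit of `G`, with symbolic itinerary `u`. -/
def GIET.IsOrbit (G : GIET A F) (u : ℤ → A) (p : ℤ → ℝ) : Prop :=
  (∀ n : ℤ, G.T (p n) = p (n + 1)) ∧
  ∀ n : ℤ, p n ∈ Set.Ioo (G.l (u n)) (G.r (u n))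

/-- The natural coding `L(T)`: the language generated by all trajectories. -/
def GIET.lang (G : GIET A F) : Set (List A) :=
  {w | ∃ (u : ℤ → A) (p : ℤ → ℝ), G.IsOrbit u p ∧
    ∃ m : ℤ, (List.ofFn fun i : Fin w.length => u (m + (i : ℕ))) = w}

/-- Rank of `a` within `s` for a strict order `r`. -/
noncomputable def rnk (r : A → A → Prop) (s : Set A) (a : A) : ℕ :=
  (s ∩ {x | r x a}).ncard

lemma rnk_lt [Fintype A] (r : A → A → Prop) [IsTrans A r] [IsIrrefl A r]
    (s : Set A) {a b : A} (ha : a ∈ s) (hab : r a b) :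
    rnk r s a < rnk r s b := by
  apply Set.ncard_lt_ncard _ (Set.toFinite _)
  constructor
  · rintro x ⟨hxs, hxa⟩
    exact ⟨hxs, trans_of r hxa hab⟩
  · intro hsub
    have := hsub ⟨ha, hab⟩
    exact absurd this.2 (irrefl_of r a)

lemma rnk_mono [Fintype A] (r : A → A → Prop) [IsTrans A r]
    (s : Set A) {a b : A} (hab : r a b) :
    rnk r s a ≤ rnk r s b := by
  apply Set.ncard_le_ncard _ (Set.toFinite _)
  rintro x ⟨hxs, hxa⟩
  exact ⟨hxs, trans_of r hxa hab⟩

lemma rnk_le [Fintype A] (r : A → A → Prop) [IsIrrefl A r]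
    (s : Set A) {a : A} (ha : a ∈ s) :
    rnk r s a ≤ s.ncard - 1 := by
  have hsub : s ∩ {x | r x a} ⊆ s \ {a} := by
    rintro x ⟨hxs, hxa⟩
    refine ⟨hxs, fun hx => irrefl_of r a (hx ▸ hxa)⟩
  calc rnk r s a ≤ (s \ {a}).ncard := Set.ncard_le_ncard hsub (Set.toFinite _)
    _ = s.ncard - 1 := Set.ncard_diff_singleton_of_mem ha

/-- a language satisfying a local order condition contains no
locally strong bispecial word. -/
theorem stmt0 [Fintype A] (L : Set (List A)) (hL : IsLanguage L)
    (hord : LocalOrderCondition L) :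
    ∀ w : List A, Bispecial L w →
      ∀ A' D' : Set A, A'.Nonempty → D'.Nonempty →
        A' ⊆ arrSet L w → D' ⊆ depSet L w →
        {p : A × A | p.1 ∈ A' ∧ p.2 ∈ D' ∧ p.1 :: (w ++ [p.2]) ∈ L}.ncard ≤
          A'.ncard + D'.ncard - 1 := by
  intro w hw A' D' hA'ne hD'ne hA'sub hD'sub
  obtain ⟨rA, rD, hrA, hrD, hoc⟩ := hord w hw
  haveI := hrA
  haveI := hrD
  set E := {p : A × A | p.1 ∈ A' ∧ p.2 ∈ D' ∧ p.1 :: (w ++ [p.2]) ∈ L} with hE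
  have hA1 : 1 ≤ A'.ncard := Set.ncard_pos (Set.toFinite _) |>.2 hA'ne
  have hD1 : 1 ≤ D'.ncard := Set.ncard_pos (Set.toFinite _) |>.2 hD'ne
  have hinj : Set.InjOn (fun p : A × A => rnk rA A' p.1 + rnk rD D' p.2) E := by
    intro p hp q hq heq
    simp only [hE, Set.mem_setOf_eq] at hp hq
    simp only at heq
    rcases trichotomous_of rA p.1 q.1 with h1 | h1 | h1
    · by_cases h2 : p.2 = q.2
      · have := rnk_lt rA A' hp.1 h1
        rw [h2] at heq
        omega
      · have hne1 : p.1 ≠ q.1 := by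
          intro e; rw [e] at h1; exact irrefl_of rA q.1 h1
        have hiff := hoc p.1 q.1 p.2 q.2 hne1 h2 hp.2.2 hq.2.2
        have h3 : rD p.2 q.2 := hiff.1 h1
        have := rnk_lt rA A' hp.1 h1
        have := rnk_lt rD D' hp.2.1 h3
        omega
    · rcases trichotomous_of rD p.2 q.2 with h2 | h2 | h2
      · have := rnk_lt rD D' hp.2.1 h2
        rw [h1] at heq
        omega
      · exact Prod.ext h1 h2
      · have := rnk_lt rD D' hq.2.1 h2
        rw [h1] at heq
        omega
    · by_cases h2 : q.2 = p.2
      · have := rnk_lt rA A' hq.1 h1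
        rw [h2] at heq
        omega
      · have hne1 : q.1 ≠ p.1 := by
          intro e; rw [e] at h1; exact irrefl_of rA p.1 h1
        have hiff := hoc q.1 p.1 q.2 p.2 hne1 h2 hq.2.2 hp.2.2
        have h3 : rD q.2 p.2 := hiff.1 h1
        have := rnk_lt rA A' hq.1 h1
        have := rnk_lt rD D' hq.2.1 h3
        omega
  have hmaps : ∀ p ∈ E, (fun p : A × A => rnk rA A' p.1 + rnk rD D' p.2) p ∈
      Set.Iio (A'.ncard + D'.ncard - 1) := by
    intro p hp
    simp only [hE, Set.mem_setOf_eq] at hp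
    have h1 := rnk_le rA A' hp.1
    have h2 := rnk_le rD D' hp.2.1
    simp only [Set.mem_Iio]
    omega
  calc E.ncard ≤ (Set.Iio (A'.ncard + D'.ncard - 1)).ncard :=
        Set.ncard_le_ncard_of_injOn _ hmaps hinj (Set.toFinite _)
    _ = A'.ncard + D'.ncard - 1 := by
        rw [show Set.Iio (A'.ncard + D'.ncard - 1) =
            ↑(Finset.range (A'.ncard + D'.ncard - 1)) by ext; simp,
          Set.ncard_coe_finset, Finset.card_range]
end

section
/- If a language L has no strong bispecial word, then L has only finitely many weak bispecial words. -/
open List Set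

variable {A : Type*}

variable {F : Finset A}

section Aux
variable [Fintype A] {L : Set (List A)}

private lemma lfin (L : Set (List A)) (n : ℕ) : {w ∈ L | w.length = n}.Finite :=
  (List.finite_length_eq A n).subset fun _ hw => hw.2

noncomputable def lF (L : Set (List A)) [Fintype A] (n : ℕ) : Finset (List A) :=
  (lfin L n).toFinset

lemma mem_lF {n : ℕ} {w : List A} : w ∈ lF L n ↔ w ∈ L ∧ w.length = n := by
  simp [lF]

lemma compl_eq (L : Set (List A)) (n : ℕ) :
    {w ∈ L | w.length = n}.ncard = (lF L n).card := by
  rw [Set.ncard_eq_toFinset_card _ (lfin L n)]; rfl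

noncomputable def depF (L : Set (List A)) [Fintype A] (w : List A) : Finset A :=
  (Set.toFinite (depSet L w)).toFinset

noncomputable def arrF (L : Set (List A)) [Fintype A] (w : List A) : Finset A :=
  (Set.toFinite (arrSet L w)).toFinset

noncomputable def extF (L : Set (List A)) [Fintype A] (w : List A) : Finset (A × A) :=
  (Set.toFinite {p : A × A | p.1 :: (w ++ [p.2]) ∈ L}).toFinset

lemma mem_depF {w : List A} {b : A} : b ∈ depF L w ↔ w ++ [b] ∈ L := by
  simp [depF, depSet]

lemma mem_arrF {w : List A} {a : A} : a ∈ arrF L w ↔ a :: w ∈ L := by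
  simp [arrF, arrSet]

lemma mem_extF {w : List A} {p : A × A} : p ∈ extF L w ↔ p.1 :: (w ++ [p.2]) ∈ L := by
  simp [extF]

lemma dep_card (w : List A) : (depSet L w).ncard = (depF L w).card := by
  rw [Set.ncard_eq_toFinset_card _ (Set.toFinite _)]; rfl

lemma arr_card (w : List A) : (arrSet L w).ncard = (arrF L w).card := by
  rw [Set.ncard_eq_toFinset_card _ (Set.toFinite _)]; rfl

lemma ext_card (w : List A) : extCount L w = (extF L w).card := by
  rw [extCount, Set.ncard_eq_toFinset_card _ (Set.toFinite _)]; rfl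

/-- p(n+1) = Σ dep -/
lemma sum_dep (hL : IsLanguage L) (n : ℕ) :
    ∑ w ∈ lF L n, (depF L w).card = (lF L (n + 1)).card := by
  classical
  have hU : lF L (n + 1) =
      (lF L n).biUnion (fun w => (depF L w).image (fun b => w ++ [b])) := by
    ext u
    simp only [Finset.mem_biUnion, Finset.mem_image, mem_lF, mem_depF]
    constructor
    · rintro ⟨hu, hlen⟩
      have hne : u ≠ [] := by intro h; simp [h] at hlen
      refine ⟨u.dropLast, ⟨?_, ?_⟩, u.getLast hne, ?_, ?_⟩
      · exact hL.1 u hu _ ((u.dropLast_prefix).isInfix)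
      · simp [hlen]
      · rwa [List.dropLast_append_getLast hne]
      · exact List.dropLast_append_getLast hne
    · rintro ⟨w, ⟨hw, hlen⟩, b, hb, rfl⟩
      exact ⟨hb, by simp [hlen]⟩
  rw [hU, Finset.card_biUnion]
  · refine Finset.sum_congr rfl fun w _ => (Finset.card_image_of_injective _ ?_).symm
    intro a b h; simpa using h
  · intro w hw w' hw' hne
    simp only [Finset.disjoint_left, Finset.mem_image]
    rintro u ⟨b, _, rfl⟩ ⟨b', _, h⟩
    have hlen : w'.length = w.length := by
      rw [Finset.mem_coe, mem_lF] at hw hw'; omega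
    exact hne ((List.append_inj h hlen).1.symm)

/-- p(n+1) = Σ arr -/
lemma sum_arr (hL : IsLanguage L) (n : ℕ) :
    ∑ w ∈ lF L n, (arrF L w).card = (lF L (n + 1)).card := by
  classical
  have hU : lF L (n + 1) =
      (lF L n).biUnion (fun w => (arrF L w).image (fun a => a :: w)) := by
    ext u
    simp only [Finset.mem_biUnion, Finset.mem_image, mem_lF, mem_arrF]
    constructor
    · rintro ⟨hu, hlen⟩
      obtain ⟨a, t, rfl⟩ : ∃ a t, u = a :: t := by
        cases u with
        | nil => simp at hlen
        | cons a t => exact ⟨a, t, rfl⟩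
      exact ⟨t, ⟨hL.1 _ hu _ ((t.suffix_cons a).isInfix), by simpa using hlen⟩, a, hu, rfl⟩
    · rintro ⟨w, ⟨hw, hlen⟩, a, ha, rfl⟩
      exact ⟨ha, by simp [hlen]⟩
  rw [hU, Finset.card_biUnion]
  · refine Finset.sum_congr rfl fun w _ => (Finset.card_image_of_injective _ ?_).symm
    intro a b h; simpa using h
  · intro w hw w' hw' hne
    simp only [Finset.disjoint_left, Finset.mem_image]
    rintro u ⟨b, _, rfl⟩ ⟨b', _, h⟩
    simp only [List.cons.injEq] at h
    exact hne h.2.symm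

/-- p(n+2) = Σ ext -/
lemma sum_ext (hL : IsLanguage L) (n : ℕ) :
    ∑ w ∈ lF L n, (extF L w).card = (lF L (n + 2)).card := by
  classical
  have hU : lF L (n + 2) =
      (lF L n).biUnion (fun w => (extF L w).image (fun p => p.1 :: (w ++ [p.2]))) := by
    ext u
    simp only [Finset.mem_biUnion, Finset.mem_image, mem_lF, mem_extF]
    constructor
    · rintro ⟨hu, hlen⟩
      obtain ⟨a, t, rfl⟩ : ∃ a t, u = a :: t := by
        cases u with
        | nil => simp at hlen
        | cons a t => exact ⟨a, t, rfl⟩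
      have htne : t ≠ [] := by
        intro h; simp [h] at hlen
      refine ⟨t.dropLast, ⟨?_, ?_⟩, (a, t.getLast htne), ?_, ?_⟩
      · exact hL.1 _ hu _ ((t.dropLast_prefix).isInfix.trans (t.suffix_cons a).isInfix)
      · simp at hlen ⊢; omega
      · simpa [List.dropLast_append_getLast htne] using hu
      · simp [List.dropLast_append_getLast htne]
    · rintro ⟨w, ⟨hw, hlen⟩, p, hp, rfl⟩
      exact ⟨hp, by simp [hlen]⟩
  rw [hU, Finset.card_biUnion]
  · refine Finset.sum_congr rfl fun w hw => (Finset.card_image_of_injOn ?_).symm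
    intro p _ q _ h
    simp only [List.cons.injEq] at h
    obtain ⟨h1, h2⟩ := h
    have := (List.append_inj h2 rfl).2
    simp at this
    exact Prod.ext h1 this
  · intro w hw w' hw' hne
    simp only [Finset.disjoint_left, Finset.mem_image]
    rintro u ⟨p, _, rfl⟩ ⟨q, _, h⟩
    have hlen : w'.length = w.length := by
      rw [Finset.mem_coe, mem_lF] at hw hw'; omega
    simp only [List.cons.injEq] at h
    exact hne ((List.append_inj h.2 hlen).1.symm)

end Aux

section Aux2
variable [Fintype A] {L : Set (List A)} {w : List A}

lemma arr_pos (hL : IsLanguage L) (hw : w ∈ L) : 1 ≤ (arrF L w).card := by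
  obtain ⟨a, ha⟩ := hL.2.1 w hw
  exact Finset.card_pos.mpr ⟨a, mem_arrF.mpr ha⟩

lemma dep_pos (hL : IsLanguage L) (hw : w ∈ L) : 1 ≤ (depF L w).card := by
  obtain ⟨a, ha⟩ := hL.2.2 w hw
  exact Finset.card_pos.mpr ⟨a, mem_depF.mpr ha⟩

lemma ext_ge_arr (hL : IsLanguage L) : (arrF L w).card ≤ (extF L w).card := by
  classical
  refine Finset.card_le_card_of_injOn
    (fun a => (a, if h : a :: w ∈ L then Classical.choose (hL.2.2 _ h) else a)) ?_ ?_
  · intro a ha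
    rw [Finset.mem_coe, mem_arrF] at ha
    rw [Finset.mem_coe, mem_extF]
    simp only [dif_pos ha]
    rw [← List.cons_append]
    exact Classical.choose_spec (hL.2.2 _ ha)
  · intro a _ b _ h
    simpa using congrArg Prod.fst h

lemma ext_ge_dep (hL : IsLanguage L) : (depF L w).card ≤ (extF L w).card := by
  classical
  refine Finset.card_le_card_of_injOn
    (fun b => (if h : w ++ [b] ∈ L then Classical.choose (hL.2.1 _ h) else b, b)) ?_ ?_
  · intro b hb
    rw [Finset.mem_coe, mem_depF] at hb
    rw [Finset.mem_coe, mem_extF]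
    simp only [dif_pos hb]
    exact Classical.choose_spec (hL.2.1 _ hb)
  · intro a _ b _ h
    simpa using congrArg Prod.snd h

lemma ext_le_dep (hL : IsLanguage L) (ha : (arrF L w).card ≤ 1) :
    (extF L w).card ≤ (depF L w).card := by
  classical
  refine Finset.card_le_card_of_injOn Prod.snd ?_ ?_
  · intro p hp
    rw [Finset.mem_coe, mem_extF] at hp
    exact mem_depF.mpr (hL.1 _ hp _ ((List.suffix_cons _ _).isInfix))
  · intro p hp q hq h
    rw [Finset.mem_coe, mem_extF] at hp hq
    have h1 : p.1 ∈ arrF L w :=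
      mem_arrF.mpr (hL.1 _ hp _
        (((p.1 :: w).prefix_append [p.2]).isInfix))
    have h2 : q.1 ∈ arrF L w :=
      mem_arrF.mpr (hL.1 _ hq _
        (((q.1 :: w).prefix_append [q.2]).isInfix))
    exact Prod.ext (Finset.card_le_one.mp ha _ h1 _ h2) h

lemma ext_le_arr (hL : IsLanguage L) (hd : (depF L w).card ≤ 1) :
    (extF L w).card ≤ (arrF L w).card := by
  classical
  refine Finset.card_le_card_of_injOn Prod.fst ?_ ?_
  · intro p hp
    rw [Finset.mem_coe, mem_extF] at hp
    exact mem_arrF.mpr (hL.1 _ hp _ (((p.1 :: w).prefix_append [p.2]).isInfix))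
  · intro p hp q hq h
    rw [Finset.mem_coe, mem_extF] at hp hq
    have h1 : p.2 ∈ depF L w :=
      mem_depF.mpr (hL.1 _ hp _ ((List.suffix_cons _ _).isInfix))
    have h2 : q.2 ∈ depF L w :=
      mem_depF.mpr (hL.1 _ hq _ ((List.suffix_cons _ _).isInfix))
    exact Prod.ext h (Finset.card_le_one.mp hd _ h1 _ h2)

lemma key_ineq (hL : IsLanguage L) (hns : ∀ w : List A, ¬ StrongBispecial L w)
    (hw : w ∈ L) : (extF L w).card + 1 ≤ (arrF L w).card + (depF L w).card := by
  have h1 := arr_pos hL hw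
  have h2 := dep_pos hL hw
  by_cases ha : (arrF L w).card ≤ 1
  · have := ext_le_dep (w := w) hL ha; omega
  by_cases hd : (depF L w).card ≤ 1
  · have := ext_le_arr (w := w) hL hd; omega
  · have hb : Bispecial L w :=
      ⟨by rw [arr_card]; omega, by rw [dep_card]; omega⟩
    have := hns w
    rw [StrongBispecial, arr_card, dep_card, ext_card] at this
    have hle : ¬ ((arrF L w).card + (depF L w).card - 1 < (extF L w).card) :=
      fun h => this ⟨hb, h⟩
    omega

lemma key_weak (hw : WeakBispecial L w) :
    (extF L w).card + 2 ≤ (arrF L w).card + (depF L w).card := by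
  obtain ⟨⟨h1, h2⟩, h3⟩ := hw
  rw [arr_card] at h1
  rw [dep_card] at h2
  rw [arr_card, dep_card, ext_card] at h3
  omega

lemma weak_mem (hL : IsLanguage L) (hw : WeakBispecial L w) : w ∈ L := by
  have h1 := hw.1.1
  rw [arr_card] at h1
  have hpos : 0 < (arrF L w).card := by omega
  obtain ⟨a, ha⟩ := Finset.card_pos.mp hpos
  rw [mem_arrF] at ha
  exact hL.1 _ ha _ ((w.suffix_cons a).isInfix)

end Aux2

/-- a language with no strong bispecial word has only finitely
many weak bispecial words. -/
theorem stmt1 [Fintype A] (L : Set (List A)) (hL : IsLanguage L)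
    (hns : ∀ w : List A, ¬ StrongBispecial L w) :
    {w : List A | WeakBispecial L w}.Finite := by
  classical
  set p : ℕ → ℕ := fun n => (lF L n).card with hp
  have hmono : ∀ n, p n ≤ p (n + 1) := by
    intro n
    calc p n = ∑ _w ∈ lF L n, 1 := by simp [hp]
      _ ≤ ∑ w ∈ lF L n, (depF L w).card :=
          Finset.sum_le_sum fun w hw => dep_pos hL (mem_lF.mp hw).1
      _ = p (n + 1) := sum_dep hL n
  have hconc : ∀ n, p (n + 2) + p n ≤ 2 * p (n + 1) := by
    intro n
    have h : ∑ w ∈ lF L n, ((extF L w).card + 1) ≤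
        ∑ w ∈ lF L n, ((arrF L w).card + (depF L w).card) :=
      Finset.sum_le_sum fun w hw => key_ineq hL hns (mem_lF.mp hw).1
    rw [Finset.sum_add_distrib, Finset.sum_add_distrib, sum_ext hL n, sum_arr hL n,
      sum_dep hL n] at h
    simp only [Finset.sum_const, smul_eq_mul, mul_one] at h
    simp only [hp]; omega
  have hstrict : ∀ n, (∃ w, WeakBispecial L w ∧ w.length = n) →
      p (n + 2) + p n + 1 ≤ 2 * p (n + 1) := by
    intro n ⟨w, hw, hwl⟩
    have hwm : w ∈ lF L n := mem_lF.mpr ⟨weak_mem hL hw, hwl⟩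
    have h : ∑ w ∈ lF L n, ((extF L w).card + 1) <
        ∑ w ∈ lF L n, ((arrF L w).card + (depF L w).card) := by
      refine Finset.sum_lt_sum (fun v hv => key_ineq hL hns (mem_lF.mp hv).1) ⟨w, hwm, ?_⟩
      have := key_weak hw; omega
    rw [Finset.sum_add_distrib, Finset.sum_add_distrib, sum_ext hL n, sum_arr hL n,
      sum_dep hL n] at h
    simp only [Finset.sum_const, smul_eq_mul, mul_one] at h
    simp only [hp]; omega
  set q : ℕ → ℕ := fun n => p (n + 1) - p n with hq
  have hqanti : Antitone q := by
    refine antitone_nat_of_succ_le fun n => ?_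
    have := hconc n; have := hmono n; have := hmono (n + 1)
    show p (n + 2) - p (n + 1) ≤ p (n + 1) - p n
    omega
  obtain ⟨N, hNe⟩ : sInf (Set.range q) ∈ Set.range q :=
    Nat.sInf_mem (Set.range_nonempty q)
  have hN : ∀ n, q N ≤ q n := fun n => hNe ▸ Nat.sInf_le ⟨n, rfl⟩
  refine (List.finite_length_lt A (N + 1)).subset ?_
  intro w hw
  simp only [Set.mem_setOf_eq]
  by_contra hlen
  push_neg at hlen
  set n := w.length with hn
  have hs := hstrict n ⟨w, hw, rfl⟩
  have h1 := hmono n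
  have h2 := hmono (n + 1)
  have h3 : q n ≤ q N := hqanti (by omega)
  have h4 := hN (n + 1)
  have h5 := hmono N
  simp only [hq] at h3 h4
  have e : p (n + 1 + 1) = p (n + 2) := rfl
  omega
end

section
/- If a language L has no strong bispecial word, then there is a finite set of one-sided infinite sequences (right-infinite sequences whose factors all lie in L) such that every left special word of L is a prefix of one of them; symmetrically, the right special words are suffixes of finitely many left-infinite sequences. -/
open List Set

variable {A : Type*}

variable {F : Finset A}

/-- A right-infinite sequence all of whose factors lie in `L`. -/
def RInf (L : Set (List A)) (x : ℕ → A) : Prop :=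
  ∀ m n : ℕ, (List.ofFn fun i : Fin n => x (m + (i : ℕ))) ∈ L

/-- A left-infinite sequence (`y k` is the letter at position `-(k+1)`) all of
whose factors lie in `L`. -/
def LInf (L : Set (List A)) (y : ℕ → A) : Prop :=
  ∀ m n : ℕ, (List.ofFn fun i : Fin n => y (m + (n - 1 - (i : ℕ)))) ∈ L

section StmtFour

variable {B : Type*}

lemma lang_mem_of_infix {L : Set (List B)} (hL : IsLanguage L) {v w : List B}
    (hw : w ∈ L) (h : v <:+: w) : v ∈ L := hL.1 w hw v h

lemma LeftSpecial.memL {L : Set (List B)} (hL : IsLanguage L) {v : List B}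
    (h : LeftSpecial L v) : v ∈ L := by
  have h0 : (arrSet L v).ncard ≠ 0 := by
    have := h; unfold LeftSpecial at this; omega
  obtain ⟨a, ha⟩ := Set.nonempty_of_ncard_ne_zero h0
  exact lang_mem_of_infix hL ha (List.infix_cons List.infix_rfl)

lemma arrSet_anti {L : Set (List B)} (hL : IsLanguage L) {u v : List B}
    (h : u <+: v) : arrSet L v ⊆ arrSet L u := by
  intro a ha
  exact lang_mem_of_infix hL ha (List.IsPrefix.isInfix (List.cons_prefix_cons.mpr ⟨rfl, h⟩))

variable [Fintype B]

lemma LeftSpecial.of_prefix {L : Set (List B)} (hL : IsLanguage L) {u v : List B}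
    (h : u <+: v) (hv : LeftSpecial L v) : LeftSpecial L u :=
  lt_of_lt_of_le hv (Set.ncard_le_ncard (arrSet_anti hL h) (Set.toFinite _))

/-- Limit of a chain of words in `L`. -/
lemma chain_limit {L : Set (List B)} (hL : IsLanguage L) (g : ℕ → List B)
    (hmem : ∀ n, g n ∈ L) (hpref : ∀ n, g n <+: g (n + 1))
    (hlen : ∀ n, n < (g n).length) :
    ∃ x : ℕ → B, RInf L x ∧ ∀ n, ∀ i, (h : i < (g n).length) → (g n)[i]'h = x i := by
  have hmono : ∀ m n, m ≤ n → g m <+: g n := by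
    intro m n h
    induction n with
    | zero => simp_all
    | succ n ih =>
      rcases Nat.lt_or_ge m (n+1) with h' | h'
      · exact (ih (by omega)).trans (hpref n)
      · have : m = n + 1 := by omega
        subst this; exact List.prefix_rfl
  set x : ℕ → B := fun i => (g i)[i]'(hlen i) with hx
  have agree : ∀ n, ∀ i, (h : i < (g n).length) → (g n)[i]'h = x i := by
    intro n i h
    rcases le_total n i with hni | hni
    · exact (hmono n i hni).getElem h
    · exact ((hmono i n hni).getElem (hlen i)).symm
  refine ⟨x, ?_, agree⟩
  intro m n
  have hN : m + n < (g (m + n)).length := hlen (m + n)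
  have heq : (List.ofFn fun i : Fin n => x (m + (i : ℕ)))
      = ((g (m + n)).take (m + n)).drop m := by
    apply List.ext_getElem
    · rw [List.length_ofFn, List.length_drop, List.length_take]; omega
    · intro i h1 h2
      simp only [List.getElem_ofFn, List.getElem_drop, List.getElem_take]
      exact (agree (m + n) (m + i) (by rw [List.length_ofFn] at h1; omega)).symm
  rw [heq]
  exact hL.1 _ (hmem (m + n)) _
    ((List.drop_suffix _ _).isInfix.trans (List.take_prefix _ _).isInfix)

lemma exists_rinf_ext {L : Set (List B)} (hL : IsLanguage L) {v : List B} (hv : v ∈ L) :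
    ∃ x : ℕ → B, RInf L x ∧ ∀ i, (h : i < v.length) → v[i]'h = x i := by
  classical
  choose f hf using hL.2.2
  let g : ℕ → {u : List B // u ∈ L} :=
    fun n => Nat.rec ⟨v, hv⟩ (fun _ p => ⟨p.1 ++ [f p.1 p.2], hf p.1 p.2⟩) n
  have hglen : ∀ n, ((g n).1).length = v.length + n := by
    intro n
    induction n with
    | zero => simp [g]
    | succ n ih => simp [g] at ih ⊢; omega
  have hgpref : ∀ n, (g n).1 <+: (g (n+1)).1 := fun n => List.prefix_append _ _
  obtain ⟨x, hx, hagree⟩ := chain_limit hL (fun n => (g (n+1)).1)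
    (fun n => (g (n+1)).2) (fun n => hgpref (n+1))
    (fun n => by show n < (g (n + 1)).1.length; have := hglen (n + 1); omega)
  refine ⟨x, hx, ?_⟩
  intro i hi
  have hpv : v <+: (g 1).1 := hgpref 0
  rw [hpv.getElem hi]
  exact hagree 0 i (by show i < (g 1).1.length; have := hglen 1; omega)

/-- `v` is a forced left-special extension of `w`. -/
def ForcedW (L : Set (List B)) (w v : List B) : Prop :=
  w <+: v ∧ LeftSpecial L v ∧
    ∀ u a b, w <+: u → u ++ [a] <+: v → LeftSpecial L (u ++ [b]) → a = b

lemma forced_self {L : Set (List B)} {w : List B} (hw : LeftSpecial L w) :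
    ForcedW L w w := by
  refine ⟨List.prefix_rfl, hw, ?_⟩
  intro u a b hwu hua _
  have h1 := hwu.length_le
  have h2 := hua.length_le
  simp at h2; omega

lemma exists_next {v u : List B} (h : v <+: u) (hne : v ≠ u) :
    ∃ c, v ++ [c] <+: u := by
  obtain ⟨t, rfl⟩ := h
  cases t with
  | nil => simp at hne
  | cons c t' => exact ⟨c, ⟨t', by simp⟩⟩

lemma forced_total {L : Set (List B)} (hL : IsLanguage L) {w v : List B}
    (hv : ForcedW L w v) :
    ∀ u, LeftSpecial L u → w <+: u → u <+: v ∨ v <+: u := by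
  suffices H : ∀ n u, u.length = n → LeftSpecial L u → w <+: u → u <+: v ∨ v <+: u by
    exact fun u => H u.length u rfl
  intro n
  induction n using Nat.strong_induction_on with
  | _ n ih =>
    intro u hlen hu hwu
    rcases eq_or_ne u w with rfl | hne
    · exact Or.inl hv.1
    · have hunil : u ≠ [] := by
        rintro rfl
        exact hne (List.prefix_nil.mp hwu).symm
      obtain ⟨u', a, rfl⟩ : ∃ u' a, u = u' ++ [a] :=
        ⟨u.dropLast, u.getLast hunil, (List.dropLast_append_getLast hunil).symm⟩
      have hwu' : w <+: u' := by
        have hlt : w.length ≤ u'.length := by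
          have h1 := hwu.length_le
          simp at h1
          rcases Nat.lt_or_ge w.length (u'.length + 1) with h' | h'
          · omega
          · exfalso
            exact hne (hwu.eq_of_length (by simp; omega)).symm
        exact List.prefix_of_prefix_length_le hwu (List.prefix_append _ _) hlt
      have hu' : LeftSpecial L u' := hu.of_prefix hL (List.prefix_append _ _)
      have hlt : u'.length < n := by simp at hlen; omega
      rcases ih u'.length hlt u' rfl hu' hwu' with h | h
      · rcases eq_or_ne u' v with rfl | hne'
        · exact Or.inr (List.prefix_append _ _)
        · obtain ⟨c, hc⟩ := exists_next h hne'
          have : c = a := hv.2.2 u' c a hwu' hc hu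
          subst this
          exact Or.inl hc
      · exact Or.inr (h.trans (List.prefix_append _ _))

lemma forced_prefix_of_le {L : Set (List B)} (hL : IsLanguage L) {w u v : List B}
    (hu : ForcedW L w u) (hv : ForcedW L w v) (h : u.length ≤ v.length) : u <+: v := by
  rcases forced_total hL hv u hu.2.1 hu.1 with h' | h'
  · exact h'
  · rw [h'.eq_of_length (le_antisymm h'.length_le h)]

/-- The key step: at a branching of left special words, arrival sets strictly
decrease (otherwise `v` would be a strong bispecial word). -/
lemma keystep {L : Set (List B)} (hL : IsLanguage L)
    (hns : ∀ w : List B, ¬ StrongBispecial L w)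
    {v : List B} {a b : B} (hab : a ≠ b)
    (ha : LeftSpecial L (v ++ [a])) (hb : LeftSpecial L (v ++ [b]))
    {c : B} (hc : LeftSpecial L (v ++ [c])) :
    (arrSet L (v ++ [c])).ncard < (arrSet L v).ncard := by
  classical
  obtain ⟨d, hd, hdc⟩ : ∃ d, LeftSpecial L (v ++ [d]) ∧ d ≠ c := by
    by_cases h : c = a
    · exact ⟨b, hb, by rw [h]; exact hab.symm⟩
    · exact ⟨a, ha, fun e => h e.symm⟩
  have hsub : arrSet L (v ++ [c]) ⊆ arrSet L v := arrSet_anti hL (List.prefix_append _ _)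
  by_contra hlt
  push_neg at hlt
  have heq : arrSet L (v ++ [c]) = arrSet L v :=
    Set.eq_of_subset_of_ncard_le hsub hlt (Set.toFinite _)
  have hvc_mem : v ++ [c] ∈ L := hc.memL hL
  have hvd_mem : v ++ [d] ∈ L := hd.memL hL
  have hcD : c ∈ depSet L v := hvc_mem
  have hdD : d ∈ depSet L v := hvd_mem
  have hA : 1 < (arrSet L v).ncard := heq ▸ hc
  have hcd_sub : ({c, d} : Set B) ⊆ depSet L v := by
    rintro e (rfl | rfl) <;> assumption
  have hD : 1 < (depSet L v).ncard := by
    have h2 : ({c, d} : Set B).ncard = 2 := Set.ncard_pair (Ne.symm hdc)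
    have := Set.ncard_le_ncard hcd_sub (Set.toFinite _)
    omega
  -- choose a left extension for every departure letter
  have hpi : ∀ q : B, ∃ p : B, q ∈ depSet L v → p :: (v ++ [q]) ∈ L := by
    intro q
    by_cases hq : q ∈ depSet L v
    · obtain ⟨p, hp⟩ := hL.2.1 _ hq
      exact ⟨p, fun _ => hp⟩
    · exact ⟨c, fun h => absurd h hq⟩
  choose π hπ using hpi
  set S1 : Set (B × B) := (fun p => (p, c)) '' arrSet L (v ++ [c]) with hS1
  set S2 : Set (B × B) := (fun p => (p, d)) '' arrSet L (v ++ [d]) with hS2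
  set S3 : Set (B × B) := (fun q => (π q, q)) '' (depSet L v \ {c, d}) with hS3
  set E : Set (B × B) := {p : B × B | p.1 :: (v ++ [p.2]) ∈ L} with hE
  have hsub1 : S1 ⊆ E := by rintro _ ⟨p, hp, rfl⟩; exact hp
  have hsub2 : S2 ⊆ E := by rintro _ ⟨p, hp, rfl⟩; exact hp
  have hsub3 : S3 ⊆ E := by rintro _ ⟨q, hq, rfl⟩; exact hπ q hq.1
  have hd12 : Disjoint S1 S2 := by
    rw [Set.disjoint_left]
    rintro _ ⟨p, hp, rfl⟩ ⟨p', hp', h'⟩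
    exact hdc (congrArg Prod.snd h')
  have hd13 : Disjoint (S1 ∪ S2) S3 := by
    rw [Set.disjoint_left]
    rintro z hz ⟨q, hq, rfl⟩
    rcases hz with ⟨p, hp, h'⟩ | ⟨p, hp, h'⟩
    · exact hq.2 (Or.inl (congrArg Prod.snd h').symm)
    · exact hq.2 (Or.inr (congrArg Prod.snd h').symm)
  have hc1 : S1.ncard = (arrSet L v).ncard := by
    rw [hS1, Set.ncard_image_of_injective _ (fun p q h => congrArg Prod.fst h), heq]
  have hc2 : S2.ncard = (arrSet L (v ++ [d])).ncard :=
    Set.ncard_image_of_injective _ (fun p q h => congrArg Prod.fst h)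
  have hc3 : S3.ncard = (depSet L v).ncard - 2 := by
    rw [hS3, Set.ncard_image_of_injective _
      (fun p q h => congrArg Prod.snd h), Set.ncard_diff hcd_sub (Set.toFinite _),
      Set.ncard_pair (Ne.symm hdc)]
  have hunion : (S1 ∪ S2 ∪ S3).ncard = S1.ncard + S2.ncard + S3.ncard := by
    rw [Set.ncard_union_eq hd13 (Set.toFinite _) (Set.toFinite _),
      Set.ncard_union_eq hd12 (Set.toFinite _) (Set.toFinite _)]
  have hEbig : S1.ncard + S2.ncard + S3.ncard ≤ extCount L v := by
    rw [← hunion]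
    exact Set.ncard_le_ncard (by
      rintro z (hz | hz)
      · rcases hz with hz | hz
        · exact hsub1 hz
        · exact hsub2 hz
      · exact hsub3 hz) (Set.toFinite _)
  have hd2 : 1 < (arrSet L (v ++ [d])).ncard := hd
  have hnsv := hns v
  unfold StrongBispecial Bispecial at hnsv
  push_neg at hnsv
  have hle := hnsv ⟨hA, hD⟩
  omega

/-- Main covering lemma, by induction on the size of the arrival set. -/
lemma cover_from {L : Set (List B)} (hL : IsLanguage L)
    (hns : ∀ w : List B, ¬ StrongBispecial L w) :
    ∀ k : ℕ, ∀ w : List B, LeftSpecial L w → (arrSet L w).ncard ≤ k →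
      ∃ S : Finset (ℕ → B), (∀ x ∈ S, RInf L x) ∧
        ∀ v, LeftSpecial L v → w <+: v →
          ∃ x ∈ S, ∀ i, (h : i < v.length) → v[i]'h = x i := by
  classical
  intro k
  induction k with
  | zero =>
    intro w hw hcard
    unfold LeftSpecial at hw
    omega
  | succ k ih =>
    intro w hw hcard
    by_cases hall : ∀ n, ∃ v, ForcedW L w v ∧ v.length = w.length + n
    · -- infinite forced chain
      choose f hf1 hf2 using hall
      have hchain : ∀ n, f n <+: f (n + 1) := fun n =>
        forced_prefix_of_le hL (hf1 n) (hf1 (n + 1)) (by rw [hf2, hf2]; omega)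
      obtain ⟨x, hx, hagree⟩ := chain_limit hL (fun n => f (n + 1))
        (fun n => ((hf1 (n + 1)).2.1).memL hL) (fun n => hchain (n + 1))
        (fun n => by rw [hf2]; omega)
      refine ⟨{x}, by simpa using hx, ?_⟩
      intro v hv hwv
      refine ⟨x, Finset.mem_singleton_self x, ?_⟩
      intro i hi
      have h1 : v <+: f (v.length + 1) := by
        rcases forced_total hL (hf1 (v.length + 1)) v hv hwv with h | h
        · exact h
        · have hl := h.length_le
          rw [hf2] at hl
          exact absurd hl (by omega)
      rw [h1.getElem hi]
      exact hagree v.length i (by rw [hf2]; have := h1.length_le; rw [hf2] at this; omega)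
    · -- there is a maximal forced word
      obtain ⟨n₁, hn₁⟩ := not_forall.mp hall
      let Q : ℕ → Prop := fun n => ¬ ∃ v, ForcedW L w v ∧ v.length = w.length + n
      have hQ : ∃ n, Q n := ⟨n₁, hn₁⟩
      have hfind : Q (Nat.find hQ) := Nat.find_spec hQ
      set N := Nat.find hQ with hN
      have hNpos : N ≠ 0 := by
        intro h
        exact (h ▸ hfind) ⟨w, forced_self hw, by simp⟩
      obtain ⟨v, hvf, hvlen⟩ : ∃ v, ForcedW L w v ∧ v.length = w.length + (N - 1) := by
        have hmin := Nat.find_min hQ (m := N - 1) (by omega)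
        simpa [Q, not_not] using hmin
      have hnone : ¬ ∃ u, ForcedW L w u ∧ u.length = w.length + N := hfind
      by_cases hex : ∃ c, LeftSpecial L (v ++ [c])
      · by_cases htwo : ∃ a b, a ≠ b ∧ LeftSpecial L (v ++ [a]) ∧ LeftSpecial L (v ++ [b])
        · -- branching case
          obtain ⟨a, b, hab, ha, hb⟩ := htwo
          have hkey : ∀ c, LeftSpecial L (v ++ [c]) → (arrSet L (v ++ [c])).ncard ≤ k := by
            intro c hc
            have h1 := keystep hL hns hab ha hb hc
            have h2 : (arrSet L v).ncard ≤ (arrSet L w).ncard :=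
              Set.ncard_le_ncard (arrSet_anti hL hvf.1) (Set.toFinite _)
            omega
          have hchild : ∀ c : B, ∃ S : Finset (ℕ → B), (∀ x ∈ S, RInf L x) ∧
              (LeftSpecial L (v ++ [c]) → ∀ u, LeftSpecial L u → v ++ [c] <+: u →
                ∃ x ∈ S, ∀ i, (h : i < u.length) → u[i]'h = x i) := by
            intro c
            by_cases hc : LeftSpecial L (v ++ [c])
            · obtain ⟨S, h1, h2⟩ := ih (v ++ [c]) hc (hkey c hc)
              exact ⟨S, h1, fun _ => h2⟩
            · exact ⟨∅, by simp, fun h => absurd h hc⟩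
          choose Sc hSc1 hSc2 using hchild
          obtain ⟨x, hx, hxa⟩ := exists_rinf_ext hL (hvf.2.1.memL hL)
          refine ⟨insert x (Finset.univ.biUnion Sc), ?_, ?_⟩
          · intro y hy
            rcases Finset.mem_insert.1 hy with rfl | hy
            · exact hx
            · obtain ⟨c, _, hyc⟩ := Finset.mem_biUnion.1 hy
              exact hSc1 c y hyc
          · intro u hu hwu
            rcases forced_total hL hvf u hu hwu with h | h
            · refine ⟨x, Finset.mem_insert_self _ _, ?_⟩
              intro i hi
              rw [h.getElem hi]
              exact hxa i (by have := h.length_le; omega)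
            · rcases eq_or_ne v u with rfl | hne
              · refine ⟨x, Finset.mem_insert_self _ _, fun i hi => hxa i hi⟩
              · obtain ⟨c, hc⟩ := exists_next h hne
                have hcLS : LeftSpecial L (v ++ [c]) := hu.of_prefix hL hc
                obtain ⟨y, hy, hya⟩ := hSc2 c hcLS u hu hc
                exact ⟨y, Finset.mem_insert_of_mem
                  (Finset.mem_biUnion.2 ⟨c, Finset.mem_univ c, hy⟩), hya⟩
        · -- exactly one child: contradiction with maximality
          exfalso
          obtain ⟨c, hc⟩ := hex
          push_neg at htwo
          have huniq : ∀ e, LeftSpecial L (v ++ [e]) → e = c := by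
            intro e he
            by_contra hne
            exact htwo e c hne he hc
          apply hnone
          refine ⟨v ++ [c], ⟨hvf.1.trans (List.prefix_append _ _), hc, ?_⟩, by simp; omega⟩
          intro u a' b' hwu hua hub
          by_cases hpre : u ++ [a'] <+: v
          · exact hvf.2.2 u a' b' hwu hpre hub
          · have hlen' : (u ++ [a']).length = v.length + 1 := by
              have h1 := hua.length_le
              simp at h1 ⊢
              rcases Nat.lt_or_ge u.length v.length with h' | h'
              · exfalso
                exact hpre (List.prefix_of_prefix_length_le hua
                  (List.prefix_append _ _) (by simp; omega))
              · omega
            have heq' : u ++ [a'] = v ++ [c] := hua.eq_of_length (by simp at hlen' ⊢; omega)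
            obtain ⟨h1, h2⟩ := List.append_inj heq' (by simp at hlen'; omega)
            subst h1
            have hb' : b' = c := huniq b' hub
            have ha' : a' = c := by simpa using h2
            rw [ha', hb']
      · -- no children: everything is a prefix of v
        push_neg at hex
        obtain ⟨x, hx, hxa⟩ := exists_rinf_ext hL (hvf.2.1.memL hL)
        refine ⟨{x}, by simpa using hx, ?_⟩
        intro u hu hwu
        have huv : u <+: v := by
          rcases forced_total hL hvf u hu hwu with h | h
          · exact h
          · rcases eq_or_ne v u with rfl | hne
            · exact List.prefix_rfl
            · obtain ⟨c, hc⟩ := exists_next h hne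
              exact absurd (hu.of_prefix hL hc) (hex c)
        refine ⟨x, Finset.mem_singleton_self x, ?_⟩
        intro i hi
        rw [huv.getElem hi]
        exact hxa i (by have := huv.length_le; omega)

lemma left_half {L : Set (List B)} (hL : IsLanguage L)
    (hns : ∀ w : List B, ¬ StrongBispecial L w) :
    ∃ S : Finset (ℕ → B), (∀ x ∈ S, RInf L x) ∧
      ∀ w ∈ L, LeftSpecial L w → ∃ x ∈ S, ∀ i : Fin w.length, w.get i = x (i : ℕ) := by
  by_cases hnil : LeftSpecial L ([] : List B)
  · obtain ⟨S, h1, h2⟩ := cover_from hL hns (Fintype.card B) [] hnil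
      (by
        have := Set.ncard_le_ncard (Set.subset_univ (arrSet L [])) (Set.toFinite _)
        rwa [Set.ncard_univ, Nat.card_eq_fintype_card] at this)
    refine ⟨S, h1, fun w _ hw => ?_⟩
    obtain ⟨x, hx, ha⟩ := h2 w hw (List.nil_prefix)
    exact ⟨x, hx, fun i => ha i i.isLt⟩
  · exact ⟨∅, by simp, fun w _ hw =>
      absurd (hw.of_prefix hL (List.nil_prefix)) hnil⟩

-- Reversal machinery

lemma isLanguage_rev {L : Set (List B)} (hL : IsLanguage L) :
    IsLanguage (List.reverse ⁻¹' L) := by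
  refine ⟨?_, ?_, ?_⟩
  · intro w hw v hv
    exact hL.1 w.reverse hw v.reverse (List.reverse_infix.mpr hv)
  · intro w hw
    obtain ⟨a, ha⟩ := hL.2.2 w.reverse hw
    exact ⟨a, by simpa [Set.mem_preimage] using ha⟩
  · intro w hw
    obtain ⟨a, ha⟩ := hL.2.1 w.reverse hw
    exact ⟨a, by simpa [Set.mem_preimage] using ha⟩

lemma arrSet_rev {L : Set (List B)} (w : List B) :
    arrSet (List.reverse ⁻¹' L) w = depSet L w.reverse := by
  ext a; simp [arrSet, depSet, Set.mem_preimage]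

lemma depSet_rev {L : Set (List B)} (w : List B) :
    depSet (List.reverse ⁻¹' L) w = arrSet L w.reverse := by
  ext a; simp [arrSet, depSet, Set.mem_preimage]

lemma extCount_rev {L : Set (List B)} (w : List B) :
    extCount (List.reverse ⁻¹' L) w = extCount L w.reverse := by
  unfold extCount
  have h : {p : B × B | p.1 :: (w ++ [p.2]) ∈ List.reverse ⁻¹' L}
      = Prod.swap '' {p : B × B | p.1 :: (w.reverse ++ [p.2]) ∈ L} := by
    rw [Set.image_swap_eq_preimage_swap]
    ext p
    simp [Set.mem_preimage]
  rw [h, Set.ncard_image_of_injective _ Prod.swap_injective]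

lemma hns_rev {L : Set (List B)} (hns : ∀ w : List B, ¬ StrongBispecial L w) :
    ∀ w : List B, ¬ StrongBispecial (List.reverse ⁻¹' L) w := by
  intro w hw
  apply hns w.reverse
  obtain ⟨⟨h1, h2⟩, h3⟩ := hw
  rw [arrSet_rev] at h1 h3
  rw [depSet_rev] at h2 h3
  rw [extCount_rev] at h3
  exact ⟨⟨h2, h1⟩, by omega⟩

lemma rinf_rev {L : Set (List B)} {x : ℕ → B} (h : RInf (List.reverse ⁻¹' L) x) :
    LInf L x := by
  intro m n
  have h1 := h m n
  rw [Set.mem_preimage] at h1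
  have heq : (List.ofFn fun i : Fin n => x (m + (n - 1 - (i : ℕ))))
      = (List.ofFn fun i : Fin n => x (m + (i : ℕ))).reverse := by
    apply List.ext_getElem
    · simp
    · intro i hi1 hi2
      rw [List.getElem_reverse]
      simp [List.getElem_ofFn]
  rw [heq]
  exact h1

end StmtFour

/-- without strong bispecials, left special words are prefixes of
finitely many right-infinite sequences, and right special words are suffixes of
finitely many left-infinite sequences. -/
theorem stmt4 [Fintype A] (L : Set (List A)) (hL : IsLanguage L)
    (hns : ∀ w : List A, ¬ StrongBispecial L w) :
    (∃ S : Finset (ℕ → A), (∀ x ∈ S, RInf L x) ∧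
      ∀ w ∈ L, LeftSpecial L w → ∃ x ∈ S, ∀ i : Fin w.length, w.get i = x (i : ℕ)) ∧
    (∃ S : Finset (ℕ → A), (∀ y ∈ S, LInf L y) ∧
      ∀ w ∈ L, RightSpecial L w →
        ∃ y ∈ S, ∀ i : Fin w.length, w.get i = y (w.length - 1 - (i : ℕ))) := by
  constructor
  · exact left_half hL hns
  · obtain ⟨S, hS1, hS2⟩ := left_half (isLanguage_rev hL) (hns_rev hns)
    refine ⟨S, fun y hy => rinf_rev (hS1 y hy), ?_⟩
    intro w hwL hw
    have hwr : w.reverse ∈ List.reverse ⁻¹' L := by simpa using hwL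
    have hws : LeftSpecial (List.reverse ⁻¹' L) w.reverse := by
      unfold LeftSpecial
      rw [arrSet_rev, List.reverse_reverse]
      exact hw
    obtain ⟨y, hy, hya⟩ := hS2 w.reverse hwr hws
    refine ⟨y, hy, ?_⟩
    intro i
    have hil := i.isLt
    have hlen : w.reverse.length = w.length := List.length_reverse
    have hj : w.length - 1 - (i : ℕ) < w.reverse.length := by rw [hlen]; omega
    have h2 := hya ⟨w.length - 1 - (i : ℕ), hj⟩
    simp only [List.get_eq_getElem] at h2 ⊢
    rw [List.getElem_reverse] at h2
    have hidx : w.length - 1 - (w.length - 1 - (i : ℕ)) = (i : ℕ) := by omega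
    simp only [hidx] at h2
    exact h2
end

section
/- Let L be a language satisfying a local order condition, and let G_n denote its Rauzy graph of order n. If G_n is connected (as an undirected graph) but G_{n+1} is not connected, then some bispecial word of length n in L has a connection. -/
open List Set

variable {A : Type*}

variable {F : Finset A}

/-- An edge of the Rauzy graph: from `av` to `vb` when `avb ∈ L`. -/
def RauzyEdge (L : Set (List A)) (w w' : List A) : Prop :=
  ∃ (a b : A) (v : List A), w = a :: v ∧ w' = v ++ [b] ∧ a :: (v ++ [b]) ∈ L

/-- Connectedness (as an undirected graph) of the Rauzy graph `G_n`. -/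
def RauzyConnected (L : Set (List A)) (n : ℕ) : Prop :=
  ∀ w ∈ L, ∀ w' ∈ L, w.length = n → w'.length = n →
    Relation.ReflTransGen
      (fun u v => u ∈ L ∧ v ∈ L ∧ u.length = n ∧ v.length = n ∧
        (RauzyEdge L u v ∨ RauzyEdge L v u)) w w'

section Aux


private lemma flip_sto {r : A → A → Prop} (hr : IsStrictTotalOrder A r) :
    IsStrictTotalOrder A (flip r) := by
  haveI := hr
  refine { trichotomous := fun a b => ?_, irrefl := fun a => irrefl_of r a,
           trans := fun a b c h1 h2 => trans_of r h2 h1 }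
  rcases trichotomous_of r a b with h | h | h
  · exact fun _ h2 => absurd h h2
  · exact fun _ _ => h
  · exact fun h1 _ => absurd h h1

private lemma asymm_sto {r : A → A → Prop} (hr : IsStrictTotalOrder A r) {x y : A}
    (h1 : r x y) (h2 : r y x) : False := by
  haveI := hr
  exact irrefl_of r x (trans_of r h1 h2)

private lemma exists_rmin {r : A → A → Prop} (hr : IsStrictTotalOrder A r)
    {s : Finset A} (hs : s.Nonempty) : ∃ m ∈ s, ∀ x ∈ s, x ≠ m → r m x := by
  classical
  haveI := hr
  obtain ⟨m, hm, hmin⟩ := Finset.exists_min_image s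
    (fun x => (s.filter (fun z => r z x)).card) hs
  refine ⟨m, hm, fun x hx hne => ?_⟩
  rcases trichotomous_of r m x with h | h | h
  · exact h
  · exact absurd h.symm hne
  · exfalso
    have hlt : (s.filter (fun z => r z x)).card < (s.filter (fun z => r z m)).card := by
      apply Finset.card_lt_card
      rw [Finset.ssubset_iff_of_subset]
      · exact ⟨x, Finset.mem_filter.mpr ⟨hx, h⟩,
          fun hmem => irrefl_of r x (Finset.mem_filter.mp hmem).2⟩
      · intro z hz
        rw [Finset.mem_filter] at hz ⊢
        exact ⟨hz.1, trans_of r hz.2 h⟩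
    exact absurd (hmin x hx) (Nat.not_le.mpr hlt)

private lemma exists_rmax {r : A → A → Prop} (hr : IsStrictTotalOrder A r)
    {s : Finset A} (hs : s.Nonempty) : ∃ m ∈ s, ∀ x ∈ s, x ≠ m → r x m :=
  exists_rmin (flip_sto hr) hs


private lemma mkOrder [Fintype A] {r : A → A → Prop} (hr : IsStrictTotalOrder A r)
    (P : A → Prop) :
    ∃ r' : A → A → Prop, IsStrictTotalOrder A r' ∧
      (∀ x y, P x → P y → (r' x y ↔ r x y)) ∧
      (∀ x c, P x → ¬ P c → r' x c) := by
  classical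
  haveI := hr
  set rank : A → ℕ := fun x => (Finset.univ.filter (fun z => P z ∧ r z x)).card with hrankdef
  have hrlt : ∀ x, rank x < Fintype.card A := by
    intro x
    have hsub : (Finset.univ.filter (fun z => P z ∧ r z x)) ⊆ Finset.univ.erase x := by
      intro z hz
      simp only [Finset.mem_filter] at hz
      refine Finset.mem_erase.mpr ⟨?_, Finset.mem_univ z⟩
      rintro rfl; exact irrefl_of r z hz.2.2
    calc rank x ≤ (Finset.univ.erase x).card := Finset.card_le_card hsub
      _ < Finset.univ.card := Finset.card_erase_lt_of_mem (Finset.mem_univ x)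
      _ = Fintype.card A := rfl
  have hmono : ∀ x y, P x → P y → r x y → rank x < rank y := by
    intro x y hx hy hxy
    apply Finset.card_lt_card
    rw [Finset.ssubset_iff_of_subset]
    · exact ⟨x, Finset.mem_filter.mpr ⟨Finset.mem_univ x, hx, hxy⟩,
        fun hmem => irrefl_of r x (Finset.mem_filter.mp hmem).2.2⟩
    · intro z hz
      rw [Finset.mem_filter] at hz ⊢
      exact ⟨hz.1, hz.2.1, trans_of r hz.2.2 hxy⟩
  set key : A → ℕ := fun x =>
    if P x then rank x else Fintype.card A + (Fintype.equivFin A x : ℕ) with hkeydef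
  have hkeyP : ∀ x, P x → key x = rank x := fun x hx => if_pos hx
  have hkeyN : ∀ x, ¬ P x → key x = Fintype.card A + (Fintype.equivFin A x : ℕ) :=
    fun x hx => if_neg hx
  have hinj : ∀ x y, key x = key y → x = y := by
    intro x y hxy
    by_contra hne
    by_cases hx : P x <;> by_cases hy : P y
    · rw [hkeyP x hx, hkeyP y hy] at hxy
      rcases trichotomous_of r x y with h | h | h
      · exact absurd hxy (Nat.ne_of_lt (hmono x y hx hy h))
      · exact hne h
      · exact absurd hxy.symm (Nat.ne_of_lt (hmono y x hy hx h))
    · rw [hkeyP x hx, hkeyN y hy] at hxy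
      exact absurd hxy (Nat.ne_of_lt (lt_of_lt_of_le (hrlt x) (Nat.le_add_right _ _)))
    · rw [hkeyN x hx, hkeyP y hy] at hxy
      exact absurd hxy.symm (Nat.ne_of_lt (lt_of_lt_of_le (hrlt y) (Nat.le_add_right _ _)))
    · rw [hkeyN x hx, hkeyN y hy] at hxy
      exact hne ((Fintype.equivFin A).injective (Fin.ext (by omega)))
  refine ⟨fun x y => key x < key y, ?_, ?_, ?_⟩
  · refine { trichotomous := fun a b => ?_, irrefl := fun a => lt_irrefl _,
             trans := fun a b c h1 h2 => lt_trans h1 h2 }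
    rcases Nat.lt_trichotomy (key a) (key b) with h | h | h
    · exact fun h1 _ => absurd h h1
    · exact fun _ _ => hinj a b h
    · exact fun _ h2 => absurd h h2
  · intro x y hx hy
    show key x < key y ↔ r x y
    rw [hkeyP x hx, hkeyP y hy]
    constructor
    · intro h
      rcases trichotomous_of r x y with h' | h' | h'
      · exact h'
      · subst h'; exact absurd h (lt_irrefl _)
      · exact absurd h (Nat.not_lt.mpr (le_of_lt (hmono y x hy hx h')))
    · exact hmono x y hx hy
  · intro x c hx hc
    show key x < key c
    rw [hkeyP x hx, hkeyN c hc]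
    exact lt_of_lt_of_le (hrlt x) (Nat.le_add_right _ _)


private def StepRel (L : Set (List A)) (w : List A) (x y : A ⊕ A) : Prop :=
  ∃ a b, a :: (w ++ [b]) ∈ L ∧
    ((x = Sum.inl a ∧ y = Sum.inr b) ∨ (x = Sum.inr b ∧ y = Sum.inl a))

private lemma stepRel_symm (L : Set (List A)) (w : List A) : Symmetric (StepRel L w) := by
  rintro x y ⟨a, b, hab, ⟨rfl, rfl⟩ | ⟨rfl, rfl⟩⟩
  · exact ⟨a, b, hab, Or.inr ⟨rfl, rfl⟩⟩
  · exact ⟨a, b, hab, Or.inl ⟨rfl, rfl⟩⟩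

private lemma reach_symm {L : Set (List A)} {w : List A} {x y : A ⊕ A}
    (h : Relation.ReflTransGen (StepRel L w) x y) :
    Relation.ReflTransGen (StepRel L w) y x :=
  by haveI : Std.Symm (StepRel L w) := ⟨fun _ _ hxy => stepRel_symm L w hxy⟩
     exact Relation.ReflTransGen.symmetric.symm _ _ h

private lemma cons_mem_of_ext {L : Set (List A)} (hL : IsLanguage L) {w : List A} {a b : A}
    (h : a :: (w ++ [b]) ∈ L) : a :: w ∈ L :=
  hL.1 _ h _ (List.IsPrefix.isInfix ⟨[b], by simp⟩)

private lemma app_mem_of_ext {L : Set (List A)} (hL : IsLanguage L) {w : List A} {a b : A}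
    (h : a :: (w ++ [b]) ∈ L) : w ++ [b] ∈ L :=
  hL.1 _ h _ (List.IsSuffix.isInfix ⟨[a], rfl⟩)

private lemma star_conn [Fintype A] {L : Set (List A)} (hL : IsLanguage L)
    (hord : LocalOrderCondition L) {w : List A} (hw : w ∈ L) :
    (∀ a a', a :: w ∈ L → a' :: w ∈ L →
      Relation.ReflTransGen (StepRel L w) (Sum.inl a) (Sum.inl a')) ∨
    (Bispecial L w ∧ HasConnection L w) := by
  classical
  have hstep1 : ∀ {a b : A}, a :: (w ++ [b]) ∈ L →
      Relation.ReflTransGen (StepRel L w) (Sum.inl a) (Sum.inr b) :=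
    fun h => Relation.ReflTransGen.single ⟨_, _, h, Or.inl ⟨rfl, rfl⟩⟩
  have hstep2 : ∀ {a b : A}, a :: (w ++ [b]) ∈ L →
      Relation.ReflTransGen (StepRel L w) (Sum.inr b) (Sum.inl a) :=
    fun h => Relation.ReflTransGen.single ⟨_, _, h, Or.inr ⟨rfl, rfl⟩⟩
  have hnbrA : ∀ a, a :: w ∈ L → ∃ b, a :: (w ++ [b]) ∈ L := by
    intro a ha
    obtain ⟨b, hb⟩ := hL.2.2 _ ha
    exact ⟨b, by simpa using hb⟩
  have hnbrD : ∀ b, w ++ [b] ∈ L → ∃ a, a :: (w ++ [b]) ∈ L := fun b hb => hL.2.1 _ hb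
  by_cases hbi : Bispecial L w
  case neg =>
    left
    intro a a' ha ha'
    rcases not_and_or.mp hbi with h | h
    · have h1 : (arrSet L w).ncard ≤ 1 := Nat.not_lt.mp h
      have heq : a = a' := (Set.ncard_le_one (Set.toFinite _)).mp h1 a ha a' ha'
      subst heq; exact Relation.ReflTransGen.refl
    · have h1 : (depSet L w).ncard ≤ 1 := Nat.not_lt.mp h
      obtain ⟨b, hb⟩ := hnbrA a ha
      obtain ⟨b', hb'⟩ := hnbrA a' ha'
      have heq : b = b' := (Set.ncard_le_one (Set.toFinite _)).mp h1
        b (app_mem_of_ext hL hb) b' (app_mem_of_ext hL hb')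
      subst heq
      exact (hstep1 hb).trans (hstep2 hb')
  case pos =>
    obtain ⟨rA, rD, hrA, hrD, hOC⟩ := hord w hbi
    by_cases hall : ∀ a a', a :: w ∈ L → a' :: w ∈ L →
        Relation.ReflTransGen (StepRel L w) (Sum.inl a) (Sum.inl a')
    · exact Or.inl hall
    right
    refine ⟨hbi, ?_⟩
    push_neg at hall
    obtain ⟨p, q, hp, hq, hpq⟩ := hall
    set reach := Relation.ReflTransGen (StepRel L w) with hreach
    set arr : Finset A := Finset.univ.filter (fun a => a :: w ∈ L) with harr
    set dep : Finset A := Finset.univ.filter (fun b => w ++ [b] ∈ L) with hdep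
    have hmemarr : ∀ {x}, x ∈ arr ↔ x :: w ∈ L := fun {x} => by simp [harr]
    have hmemdep : ∀ {x}, x ∈ dep ↔ w ++ [x] ∈ L := fun {x} => by simp [hdep]
    obtain ⟨m, hm_arr, hm_min⟩ := exists_rmin hrA (s := arr) ⟨p, hmemarr.mpr hp⟩
    have hmL : m :: w ∈ L := hmemarr.mp hm_arr
    set CArr : Finset A := arr.filter (fun x => reach (Sum.inl m) (Sum.inl x)) with hCArr
    set SArr : Finset A := arr.filter (fun x => ¬ reach (Sum.inl m) (Sum.inl x)) with hSArr
    set CDep : Finset A := dep.filter (fun y => reach (Sum.inl m) (Sum.inr y)) with hCDep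
    set SDep : Finset A := dep.filter (fun y => ¬ reach (Sum.inl m) (Sum.inr y)) with hSDep
    have hSArr_ne : SArr.Nonempty := by
      by_cases hmp : reach (Sum.inl m) (Sum.inl p)
      · by_cases hmq : reach (Sum.inl m) (Sum.inl q)
        · exact absurd ((reach_symm hmp).trans hmq) hpq
        · exact ⟨q, Finset.mem_filter.mpr ⟨hmemarr.mpr hq, hmq⟩⟩
      · exact ⟨p, Finset.mem_filter.mpr ⟨hmemarr.mpr hp, hmp⟩⟩
    obtain ⟨a', ha'S, ha'min⟩ := exists_rmin hrA hSArr_ne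
    have ha'arr : a' :: w ∈ L := hmemarr.mp (Finset.mem_filter.mp ha'S).1
    have ha'nr : ¬ reach (Sum.inl m) (Sum.inl a') := (Finset.mem_filter.mp ha'S).2
    have hSDep_ne : SDep.Nonempty := by
      obtain ⟨b0, hb0⟩ := hnbrA a' ha'arr
      refine ⟨b0, Finset.mem_filter.mpr ⟨hmemdep.mpr (app_mem_of_ext hL hb0), fun hr => ?_⟩⟩
      exact ha'nr (hr.trans (hstep2 hb0))
    obtain ⟨b', hb'S, hb'min⟩ := exists_rmin hrD hSDep_ne
    have hb'dep : w ++ [b'] ∈ L := hmemdep.mp (Finset.mem_filter.mp hb'S).1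
    have hb'nr : ¬ reach (Sum.inl m) (Sum.inr b') := (Finset.mem_filter.mp hb'S).2
    obtain ⟨a, haC, hamax⟩ := exists_rmax hrA (s := CArr)
      ⟨m, Finset.mem_filter.mpr ⟨hm_arr, Relation.ReflTransGen.refl⟩⟩
    have haarr : a :: w ∈ L := hmemarr.mp (Finset.mem_filter.mp haC).1
    have har : reach (Sum.inl m) (Sum.inl a) := (Finset.mem_filter.mp haC).2
    have hCDep_ne : CDep.Nonempty := by
      obtain ⟨c0, hc0⟩ := hnbrA m hmL
      exact ⟨c0, Finset.mem_filter.mpr ⟨hmemdep.mpr (app_mem_of_ext hL hc0), hstep1 hc0⟩⟩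
    obtain ⟨b, hbC, hbmax⟩ := exists_rmax hrD hCDep_ne
    have hbdep : w ++ [b] ∈ L := hmemdep.mp (Finset.mem_filter.mp hbC).1
    have hbr : reach (Sum.inl m) (Sum.inr b) := (Finset.mem_filter.mp hbC).2
    have hEa'b' : a' :: (w ++ [b']) ∈ L := by
      obtain ⟨c, hc⟩ := hnbrA a' ha'arr
      have hcS : c ∈ SDep := Finset.mem_filter.mpr ⟨hmemdep.mpr (app_mem_of_ext hL hc),
        fun hr => ha'nr (hr.trans (hstep2 hc))⟩
      obtain ⟨g, hg⟩ := hnbrD b' hb'dep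
      have hgS : g ∈ SArr := Finset.mem_filter.mpr ⟨hmemarr.mpr (cons_mem_of_ext hL hg),
        fun hr => hb'nr (hr.trans (hstep1 hg))⟩
      by_cases hga : g = a'
      · subst hga; exact hg
      by_cases hcb : c = b'
      · subst hcb; exact hc
      have h1 : rA a' g := ha'min g hgS hga
      have h2 : rD b' c := hb'min c hcS hcb
      have hiff := hOC a' g c b' (fun he => hga he.symm) hcb hc hg
      exact absurd (hiff.mp h1) (fun h => asymm_sto hrD h h2)
    have hEab : a :: (w ++ [b]) ∈ L := by
      obtain ⟨c, hc⟩ := hnbrA a haarr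
      have hcC : c ∈ CDep := Finset.mem_filter.mpr ⟨hmemdep.mpr (app_mem_of_ext hL hc),
        har.trans (hstep1 hc)⟩
      obtain ⟨g, hg⟩ := hnbrD b hbdep
      have hgC : g ∈ CArr := Finset.mem_filter.mpr ⟨hmemarr.mpr (cons_mem_of_ext hL hg),
        hbr.trans (hstep2 hg)⟩
      by_cases hga : g = a
      · subst hga; exact hg
      by_cases hcb : c = b
      · subst hcb; exact hc
      have h1 : rA g a := hamax g hgC hga
      have h2 : rD c b := hbmax c hcC hcb
      have hiff := hOC g a b c hga (fun he => hcb he.symm) hg hc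
      exact absurd (hiff.mp h1) (fun h => asymm_sto hrD h h2)
    set f : A ⊕ A → Prop := Sum.elim (fun c => rA c a') (fun d => rD d b') with hf
    have hstep_const : ∀ x y, StepRel L w x y → ¬ reach x (Sum.inl a') → (f x ↔ f y) := by
      rintro x y ⟨c, d, hcd, ⟨rfl, rfl⟩ | ⟨rfl, rfl⟩⟩ hnr
      · have hc : c ≠ a' := by rintro rfl; exact hnr Relation.ReflTransGen.refl
        have hd : d ≠ b' := by rintro rfl; exact hnr ((hstep1 hcd).trans (hstep2 hEa'b'))
        exact hOC c a' d b' hc hd hcd hEa'b'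
      · have hc : c ≠ a' := by rintro rfl; exact hnr (hstep2 hcd)
        have hd : d ≠ b' := by rintro rfl; exact hnr (hstep2 hEa'b')
        exact (hOC c a' d b' hc hd hcd hEa'b').symm
    have hconst : ∀ x y, reach x y → ¬ reach x (Sum.inl a') → (f x ↔ f y) := by
      intro x y hxy
      induction hxy with
      | refl => exact fun _ => Iff.rfl
      | @tail p q hsub hstep ih =>
        intro hnr
        exact (ih hnr).trans (hstep_const p q hstep (fun hr => hnr (hsub.trans hr)))
    have hfm : f (Sum.inl m) := by
      have hma' : m ≠ a' := by rintro rfl; exact ha'nr Relation.ReflTransGen.refl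
      exact hm_min a' (Finset.mem_filter.mp ha'S).1 (Ne.symm hma')
    have hCbelow : ∀ x, reach (Sum.inl m) x → f x := by
      intro x hx
      exact (hconst _ _ hx ha'nr).mp hfm
    have haa' : rA a a' := hCbelow _ har
    have hbb' : rD b b' := hCbelow _ hbr
    have hNab' : a :: (w ++ [b']) ∉ L := fun h => hb'nr (har.trans (hstep1 h))
    have hNa'b : a' :: (w ++ [b]) ∉ L := fun h => ha'nr (hbr.trans (hstep2 h))
    have hbtwA : ∀ x, x :: w ∈ L → ¬ (rA a x ∧ rA x a') := by
      rintro x hx ⟨h1, h2⟩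
      by_cases hr : reach (Sum.inl m) (Sum.inl x)
      · have hxa : x ≠ a := by rintro rfl; exact asymm_sto hrA h1 h1
        exact asymm_sto hrA h1 (hamax x (Finset.mem_filter.mpr ⟨hmemarr.mpr hx, hr⟩) hxa)
      · have hxa' : x ≠ a' := by rintro rfl; exact asymm_sto hrA h2 h2
        exact asymm_sto hrA h2 (ha'min x (Finset.mem_filter.mpr ⟨hmemarr.mpr hx, hr⟩) hxa')
    have hbtwD : ∀ y, w ++ [y] ∈ L → ¬ (rD b y ∧ rD y b') := by
      rintro y hy ⟨h1, h2⟩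
      by_cases hr : reach (Sum.inl m) (Sum.inr y)
      · have hyb : y ≠ b := by rintro rfl; exact asymm_sto hrD h1 h1
        exact asymm_sto hrD h1 (hbmax y (Finset.mem_filter.mpr ⟨hmemdep.mpr hy, hr⟩) hyb)
      · have hyb' : y ≠ b' := by rintro rfl; exact asymm_sto hrD h2 h2
        exact asymm_sto hrD h2 (hb'min y (Finset.mem_filter.mpr ⟨hmemdep.mpr hy, hr⟩) hyb')
    obtain ⟨rA', hrA', hagA, habA⟩ := mkOrder hrA (fun x => x :: w ∈ L)
    obtain ⟨rD', hrD', hagD, habD⟩ := mkOrder hrD (fun y => w ++ [y] ∈ L)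
    refine ⟨rA', rD', hrA', hrD', ?_, a, a', b, b', ⟨?_, ?_⟩, ⟨?_, ?_⟩,
      hEab, hEa'b', hNab', hNa'b⟩
    · intro x y c d hne1 hne2 h1 h2
      have hx := cons_mem_of_ext hL h1
      have hy := cons_mem_of_ext hL h2
      have hc := app_mem_of_ext hL h1
      have hd := app_mem_of_ext hL h2
      exact (hagA x y hx hy).trans ((hOC x y c d hne1 hne2 h1 h2).trans (hagD c d hc hd).symm)
    · exact (hagA a a' haarr ha'arr).mpr haa'
    · rintro c ⟨h1, h2⟩
      by_cases hc : c :: w ∈ L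
      · exact hbtwA c hc ⟨(hagA a c haarr hc).mp h1, (hagA c a' hc ha'arr).mp h2⟩
      · exact asymm_sto hrA' h2 (habA a' c ha'arr hc)
    · exact (hagD b b' hbdep hb'dep).mpr hbb'
    · rintro c ⟨h1, h2⟩
      by_cases hc : w ++ [c] ∈ L
      · exact hbtwD c hc ⟨(hagD b c hbdep hc).mp h1, (hagD c b' hc hb'dep).mp h2⟩
      · exact asymm_sto hrD' h2 (habD b' c hb'dep hc)

private lemma reach_to_path {L : Set (List A)} (hL : IsLanguage L) {n : ℕ} {w : List A}
    (hlen : w.length = n) {x y : A ⊕ A}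
    (h : Relation.ReflTransGen (StepRel L w) x y) :
    Relation.ReflTransGen
      (fun u v => u ∈ L ∧ v ∈ L ∧ u.length = n + 1 ∧ v.length = n + 1 ∧
        (RauzyEdge L u v ∨ RauzyEdge L v u))
      (Sum.elim (fun a => a :: w) (fun b => w ++ [b]) x)
      (Sum.elim (fun a => a :: w) (fun b => w ++ [b]) y) := by
  induction h with
  | refl => exact Relation.ReflTransGen.refl
  | @tail p q hsub hstep ih =>
    refine ih.tail ?_
    obtain ⟨a, b, hab, ⟨rfl, rfl⟩ | ⟨rfl, rfl⟩⟩ := hstep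
    · exact ⟨cons_mem_of_ext hL hab, app_mem_of_ext hL hab,
        by simp [hlen], by simp [hlen], Or.inl ⟨a, b, w, rfl, rfl, hab⟩⟩
    · exact ⟨app_mem_of_ext hL hab, cons_mem_of_ext hL hab,
        by simp [hlen], by simp [hlen], Or.inr ⟨a, b, w, rfl, rfl, hab⟩⟩

end Aux

/-- if `G_n` is connected but `G_{n+1}` is not, some bispecial
word of length `n` has a connection. -/
theorem stmt5 [Fintype A] (L : Set (List A)) (hL : IsLanguage L)
    (hord : LocalOrderCondition L) (n : ℕ)
    (hconn : RauzyConnected L n) (hnot : ¬ RauzyConnected L (n + 1)) :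
    ∃ w : List A, w ∈ L ∧ w.length = n ∧ Bispecial L w ∧ HasConnection L w := by
  classical
  by_contra hcon
  push_neg at hcon
  have hnc : ∀ w, w ∈ L → w.length = n → Bispecial L w → ¬ HasConnection L w := hcon
  apply hnot
  have hstar : ∀ w, w ∈ L → w.length = n → ∀ a a', a :: w ∈ L → a' :: w ∈ L →
      Relation.ReflTransGen (StepRel L w) (Sum.inl a) (Sum.inl a') := by
    intro w hwL hwlen
    rcases star_conn hL hord hwL with h | ⟨hb, hc⟩
    · exact h
    · exact absurd hc (hnc w hwL hwlen hb)
  intro x hx y hy hlx hly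
  have hxne : x ≠ [] := by intro h; rw [h] at hlx; simp at hlx
  have hyne : y ≠ [] := by intro h; rw [h] at hly; simp at hly
  obtain ⟨a, v, rfl⟩ := List.exists_cons_of_ne_nil hxne
  obtain ⟨a', v', rfl⟩ := List.exists_cons_of_ne_nil hyne
  have hv : v ∈ L := hL.1 _ hx _ (List.IsSuffix.isInfix ⟨[a], rfl⟩)
  have hv' : v' ∈ L := hL.1 _ hy _ (List.IsSuffix.isInfix ⟨[a'], rfl⟩)
  have hvlen : v.length = n := by simpa using hlx
  have hv'len : v'.length = n := by simpa using hly
  have main : ∀ v'' : List A,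
      Relation.ReflTransGen
        (fun u v_1 => u ∈ L ∧ v_1 ∈ L ∧ u.length = n ∧ v_1.length = n ∧
          (RauzyEdge L u v_1 ∨ RauzyEdge L v_1 u)) v v'' →
      ∀ c, c :: v'' ∈ L →
      Relation.ReflTransGen
        (fun u v_1 => u ∈ L ∧ v_1 ∈ L ∧ u.length = n + 1 ∧ v_1.length = n + 1 ∧
          (RauzyEdge L u v_1 ∨ RauzyEdge L v_1 u)) (a :: v) (c :: v'') := by
    intro v'' hpath
    induction hpath with
    | refl =>
      intro c hc
      exact reach_to_path hL hvlen (hstar v hv hvlen a c hx hc)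
    | @tail u v2 hsub hedge ih =>
      intro c hc
      obtain ⟨huL, hv2L, hulen, hv2len, hedge⟩ := hedge
      obtain ⟨e, he⟩ := hL.2.1 u huL
      refine (ih e he).trans ?_
      rcases hedge with ⟨p, f, t, rfl, rfl, hz⟩ | ⟨p, f, t, rfl, rfl, hz⟩
      · -- u = p :: t, v2 = t ++ [f], hz : p :: (t ++ [f]) ∈ L
        -- z = (p :: t) ++ [f] = p :: (t ++ [f])
        have hzmem : (p :: t) ++ [f] ∈ L := by simpa using hz
        obtain ⟨g, hg⟩ := hL.2.1 _ hzmem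
        have hgu : g :: (p :: t) ∈ L := cons_mem_of_ext hL hg
        have r1 : Relation.ReflTransGen (StepRel L (p :: t)) (Sum.inl e) (Sum.inr f) :=
          (hstar (p :: t) huL hulen e g he hgu).trans
            (Relation.ReflTransGen.single ⟨g, f, hg, Or.inl ⟨rfl, rfl⟩⟩)
      -- path from e :: (p :: t) to (p :: t) ++ [f]
        have path1 := reach_to_path hL hulen r1
        -- star at v2 = t ++ [f] : from p to c
        have hpz : p :: (t ++ [f]) ∈ L := hz
        have path2 := reach_to_path hL hv2len
          (hstar (t ++ [f]) hv2L hv2len p c hpz hc)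
        simp only [Sum.elim_inl, Sum.elim_inr] at path1 path2
        have heq : (p :: t) ++ [f] = p :: (t ++ [f]) := by simp
        rw [heq] at path1
        exact path1.trans path2
      · -- v2 = p :: t, u = t ++ [f], hz : p :: (t ++ [f]) ∈ L
        have hpu : p :: (t ++ [f]) ∈ L := hz
        have r1 := hstar (t ++ [f]) huL hulen e p he hpu
        have path1 := reach_to_path hL hulen r1
        -- p :: (t ++ [f]) = (p :: t) ++ [f] : star at v2 = p :: t, out-letter f
        have hzmem : (p :: t) ++ [f] ∈ L := by simpa using hz
        obtain ⟨g, hg⟩ := hL.2.1 _ hzmem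
        have hgv2 : g :: (p :: t) ∈ L := cons_mem_of_ext hL hg
        have r2 : Relation.ReflTransGen (StepRel L (p :: t)) (Sum.inr f) (Sum.inl c) :=
          (Relation.ReflTransGen.single ⟨g, f, hg, Or.inr ⟨rfl, rfl⟩⟩).trans
            (hstar (p :: t) hv2L hv2len g c hgv2 hc)
        have path2 := reach_to_path hL hv2len r2
        simp only [Sum.elim_inl, Sum.elim_inr] at path1 path2
        have heq : p :: (t ++ [f]) = (p :: t) ++ [f] := by simp
        rw [heq] at path1
        exact path1.trans path2
  exact main v' (hconn v hv v' hv' hvlen hv'len) a' hy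
end

section
/- Suppose L satisfies an ℱ-flipped order condition. Then the relation < defined on the shift space X_L (via first disagreement of coordinates, comparing with <_D to the right and <_A to the left, with order reversal according to the parity of occurrences of letters from ℱ) is a total order, and every nonempty subset of X_L has a least upper bound and a greatest lower bound in X_L. -/
open List Set

variable {A : Type*}

variable {F : Finset A}

/-- The order on `X_L` from Definition `otra`: compare at the first disagreement
to the right using `rD` (reversed when an odd number of the agreeing letters
`x 0, …, x (k-1)` lies in `F`), or at the first disagreement to the left using
`rA` with the analogous parity rule. -/
def flipLT [DecidableEq A] (F : Finset A) (rA rD : A → A → Prop)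
    (x y : ℤ → A) : Prop :=
  (∃ k : ℕ, (∀ i : ℕ, i < k → x (i : ℤ) = y (i : ℤ)) ∧ x (k : ℤ) ≠ y (k : ℤ) ∧
    (if Even (((Finset.range k).filter (fun i : ℕ => x (i : ℤ) ∈ F)).card)
      then rD (x (k : ℤ)) (y (k : ℤ)) else rD (y (k : ℤ)) (x (k : ℤ)))) ∨
  (∃ k : ℕ, (∀ i : ℕ, i < k → x (-(i : ℤ) - 1) = y (-(i : ℤ) - 1)) ∧
    x (-(k : ℤ) - 1) ≠ y (-(k : ℤ) - 1) ∧
    (if Even (((Finset.range k).filter (fun i : ℕ => x (-(i : ℤ) - 1) ∈ F)).card)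
      then rA (x (-(k : ℤ) - 1)) (y (-(k : ℤ) - 1))
      else rA (y (-(k : ℤ) - 1)) (x (-(k : ℤ) - 1))))


section Stmt6Aux

set_option linter.unusedSectionVars false

variable {A : Type*} [DecidableEq A]

/-! ### One-sided flipped lexicographic comparison -/

/-- One-sided flipped lexicographic comparison on `ℕ → A`. -/
def sltF (F : Finset A) (r : A → A → Prop) (u v : ℕ → A) : Prop :=
  ∃ k : ℕ, (∀ i : ℕ, i < k → u i = v i) ∧ u k ≠ v k ∧
    (if Even (((Finset.range k).filter (fun i : ℕ => u i ∈ F)).card)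
      then r (u k) (v k) else r (v k) (u k))

variable {F : Finset A} {r : A → A → Prop}

lemma sltF_diff {u v : ℕ → A} (h : sltF F r u v) : ∃ k, u k ≠ v k := by
  obtain ⟨k, _, hk, _⟩ := h; exact ⟨k, hk⟩

lemma sltF_irrefl (u : ℕ → A) : ¬ sltF F r u u := by
  rintro ⟨k, _, hk, _⟩; exact hk rfl

lemma sltF_wit_eq {u v : ℕ → A} {k₁ k₂ : ℕ}
    (h₁ : (∀ i, i < k₁ → u i = v i) ∧ u k₁ ≠ v k₁)
    (h₂ : (∀ i, i < k₂ → u i = v i) ∧ u k₂ ≠ v k₂) : k₁ = k₂ := by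
  rcases lt_trichotomy k₁ k₂ with h | h | h
  · exact absurd (h₂.1 _ h) h₁.2
  · exact h
  · exact absurd (h₁.1 _ h) h₂.2

lemma filterF_congr_of_eq {u v : ℕ → A} {k : ℕ} (h : ∀ i, i < k → u i = v i) :
    ((Finset.range k).filter (fun i : ℕ => u i ∈ F)).card
      = ((Finset.range k).filter (fun i : ℕ => v i ∈ F)).card := by
  congr 1
  apply Finset.filter_congr
  intro i hi
  rw [h i (Finset.mem_range.mp hi)]

section STO
variable (hr : IsStrictTotalOrder A r)
include hr

lemma sltF_trans {u v w : ℕ → A} (h₁ : sltF F r u v) (h₂ : sltF F r v w) :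
    sltF F r u w := by
  obtain ⟨k₁, hpre₁, hne₁, hcmp₁⟩ := h₁
  obtain ⟨k₂, hpre₂, hne₂, hcmp₂⟩ := h₂
  rcases lt_trichotomy k₁ k₂ with h | h | h
  · refine ⟨k₁, fun i hi => (hpre₁ i hi).trans (hpre₂ i (hi.trans h)), ?_, ?_⟩
    · rw [← hpre₂ k₁ h]; exact hne₁
    · rw [← hpre₂ k₁ h]; exact hcmp₁
  · subst h
    have hpre : ∀ i, i < k₁ → u i = w i := fun i hi => (hpre₁ i hi).trans (hpre₂ i hi)
    have hcard : ((Finset.range k₁).filter (fun i : ℕ => v i ∈ F)).card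
        = ((Finset.range k₁).filter (fun i : ℕ => u i ∈ F)).card :=
      filterF_congr_of_eq (fun i hi => (hpre₁ i hi).symm)
    rw [hcard] at hcmp₂
    by_cases huw : u k₁ = w k₁
    · exfalso
      rw [huw] at hcmp₁
      split_ifs at hcmp₁ hcmp₂ with he
      · exact hr.irrefl _ (hr.trans _ _ _ hcmp₁ hcmp₂)
      · exact hr.irrefl _ (hr.trans _ _ _ hcmp₂ hcmp₁)
    · refine ⟨k₁, hpre, huw, ?_⟩
      split_ifs at hcmp₁ hcmp₂ ⊢ with he
      · exact hr.trans _ _ _ hcmp₁ hcmp₂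
      · exact hr.trans _ _ _ hcmp₂ hcmp₁
  · refine ⟨k₂, fun i hi => (hpre₁ i (hi.trans h)).trans (hpre₂ i hi), ?_, ?_⟩
    · rw [hpre₁ k₂ h]; exact hne₂
    · have hcard : ((Finset.range k₂).filter (fun i : ℕ => u i ∈ F)).card
          = ((Finset.range k₂).filter (fun i : ℕ => v i ∈ F)).card :=
        filterF_congr_of_eq (fun i hi => hpre₁ i (hi.trans h))
      rw [hcard, hpre₁ k₂ h]
      exact hcmp₂

lemma sltF_total {u v : ℕ → A} (h : ∃ k, u k ≠ v k) : sltF F r u v ∨ sltF F r v u := by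
  classical
  have hk := Nat.find_spec h
  set k := Nat.find h with hkdef
  have hpre : ∀ i, i < k → u i = v i := fun i hi => by
    by_contra hc; exact absurd (Nat.find_le hc) (not_le.mpr hi)
  have hcard : ((Finset.range k).filter (fun i : ℕ => v i ∈ F)).card
      = ((Finset.range k).filter (fun i : ℕ => u i ∈ F)).card :=
    filterF_congr_of_eq (fun i hi => (hpre i hi).symm)
  rcases (show r (u k) (v k) ∨ u k = v k ∨ r (v k) (u k) from (or_iff_not_imp_left.2 fun h1 => or_iff_not_imp_right.2 fun h2 => hr.trichotomous _ _ h1 h2)) with hlt | heq | hgt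
  · by_cases he : Even (((Finset.range k).filter (fun i : ℕ => u i ∈ F)).card)
    · exact Or.inl ⟨k, hpre, hk, by rw [if_pos he]; exact hlt⟩
    · refine Or.inr ⟨k, fun i hi => (hpre i hi).symm, Ne.symm hk, ?_⟩
      rw [hcard, if_neg he]; exact hlt
  · exact absurd heq hk
  · by_cases he : Even (((Finset.range k).filter (fun i : ℕ => u i ∈ F)).card)
    · refine Or.inr ⟨k, fun i hi => (hpre i hi).symm, Ne.symm hk, ?_⟩
      rw [hcard, if_pos he]; exact hgt
    · exact Or.inl ⟨k, hpre, hk, by rw [if_neg he]; exact hgt⟩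

lemma sltF_asymm {u v : ℕ → A} (h₁ : sltF F r u v) (h₂ : sltF F r v u) : False :=
  sltF_irrefl u (sltF_trans hr h₁ h₂)

/-- `sltF` is decided at the first disagreement. -/
lemma sltF_iff_at {u v : ℕ → A} (h : ∃ n, u n ≠ v n) :
    sltF F r u v ↔
      (if Even (((Finset.range (Nat.find h)).filter (fun i : ℕ => u i ∈ F)).card)
        then r (u (Nat.find h)) (v (Nat.find h))
        else r (v (Nat.find h)) (u (Nat.find h))) := by
  classical
  have hk := Nat.find_spec h
  have hpre : ∀ i, i < Nat.find h → u i = v i := fun i hi => by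
    by_contra hc; exact absurd (Nat.find_le hc) (not_le.mpr hi)
  constructor
  · rintro ⟨k₂, hpre₂, hne₂, hcmp₂⟩
    have : k₂ = Nat.find h := sltF_wit_eq ⟨hpre₂, hne₂⟩ ⟨hpre, hk⟩
    subst this
    exact hcmp₂
  · intro hcmp
    exact ⟨Nat.find h, hpre, hk, hcmp⟩

end STO

/-- For a strict total order, the reverse comparison is the negation. -/
lemma sto_rev_iff (hr : IsStrictTotalOrder A r) {a b : A} (hab : a ≠ b) :
    r b a ↔ ¬ r a b := by
  constructor
  · intro h1 h2
    exact hr.irrefl _ (hr.trans _ _ _ h1 h2)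
  · intro h1
    rcases (show r a b ∨ a = b ∨ r b a from (or_iff_not_imp_left.2 fun h1 => or_iff_not_imp_right.2 fun h2 => hr.trichotomous _ _ h1 h2)) with h | h | h
    · exact absurd h h1
    · exact absurd h hab
    · exact h

/-! ### Windows -/

/-- The factor of `x` starting at `m` of length `n`. -/
def win (x : ℤ → A) (m : ℤ) (n : ℕ) : List A := List.ofFn fun i : Fin n => x (m + (i : ℕ))

lemma win_mem {L : Set (List A)} {x : ℤ → A} (hx : x ∈ XL L) (m : ℤ) (n : ℕ) :
    win x m n ∈ L := hx m n

lemma win_zero (x : ℤ → A) (m : ℤ) : win x m 0 = [] := rfl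

lemma win_succ_left (x : ℤ → A) (m : ℤ) (n : ℕ) :
    win x m (n + 1) = x m :: win x (m + 1) n := by
  rw [win, List.ofFn_succ]
  congr 1
  · simp
  · rw [win]
    congr 1
    funext i
    congr 1
    push_cast [Fin.val_succ]
    ring

lemma win_add (x : ℤ → A) (m : ℤ) (n₁ n₂ : ℕ) :
    win x m (n₁ + n₂) = win x m n₁ ++ win x (m + n₁) n₂ := by
  induction n₁ generalizing m with
  | zero => simp [win_zero, win]
  | succ n ih =>
      have h1 : n + 1 + n₂ = (n + n₂) + 1 := by omega
      rw [h1, win_succ_left, win_succ_left, ih]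
      simp only [List.cons_append]
      congr 2
      push_cast
      ring

lemma win_one (x : ℤ → A) (m : ℤ) : win x m 1 = [x m] := by
  rw [win_succ_left, win_zero]

lemma countP_ofFn (p : A → Bool) : ∀ (n : ℕ) (f : Fin n → A),
    (List.ofFn f).countP p = ∑ i : Fin n, (if p (f i) then 1 else 0) := by
  intro n
  induction n with
  | zero => intro f; rfl
  | succ n ih =>
      intro f
      rw [List.ofFn_succ, List.countP_cons, ih, Fin.sum_univ_succ]
      exact add_comm _ _

end Stmt6Aux


section Consistency

set_option linter.unusedSectionVars false

variable {A : Type*} [DecidableEq A] [Fintype A]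

set_option maxHeartbeats 1000000 in
/-- Consistency: if `x, y ∈ X_L` disagree both to the right and to the left,
then the right comparison and the left comparison agree. -/
lemma consistency {L : Set (List A)} (hL : IsLanguage L) {F : Finset A}
    {rA rD : A → A → Prop} (hA : IsStrictTotalOrder A rA) (hD : IsStrictTotalOrder A rD)
    (hoc : FlippedOC L F rA rD) {x y : ℤ → A} (hx : x ∈ XL L) (hy : y ∈ XL L)
    (hdr : ∃ n : ℕ, x (n : ℤ) ≠ y (n : ℤ))
    (hdl : ∃ n : ℕ, x (-(n : ℤ) - 1) ≠ y (-(n : ℤ) - 1)) :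
    (sltF F rD (fun n : ℕ => x (n : ℤ)) (fun n : ℕ => y (n : ℤ)) ↔
      sltF F rA (fun n : ℕ => x (-(n : ℤ) - 1)) (fun n : ℕ => y (-(n : ℤ) - 1))) := by
  classical
  obtain ⟨hL1, -, -⟩ := hL
  have hcd : x ((Nat.find hdr : ℕ) : ℤ) ≠ y ((Nat.find hdr : ℕ) : ℤ) := Nat.find_spec hdr
  have hab : x (-((Nat.find hdl : ℕ) : ℤ) - 1) ≠ y (-((Nat.find hdl : ℕ) : ℤ) - 1) :=
    Nat.find_spec hdl
  set k : ℕ := Nat.find hdr with hk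
  set k' : ℕ := Nat.find hdl with hk'
  have hpreR : ∀ i : ℕ, i < k → x (i : ℤ) = y (i : ℤ) := by
    intro i hi
    by_contra hc
    exact absurd (hk ▸ Nat.find_le hc) (not_le.mpr hi)
  have hpreL : ∀ i : ℕ, i < k' → x (-(i : ℤ) - 1) = y (-(i : ℤ) - 1) := by
    intro i hi
    by_contra hc
    exact absurd (hk' ▸ Nat.find_le hc) (not_le.mpr hi)
  set a := x (-(k' : ℤ) - 1) with ha
  set b := y (-(k' : ℤ) - 1) with hb
  set c := x (k : ℤ) with hc
  set d := y (k : ℤ) with hd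
  set w : List A := win x (-(k' : ℤ)) (k' + k) with hw
  -- the key factor memberships
  have hwin : win x (-(k' : ℤ) - 1) (1 + ((k' + k) + 1)) = a :: (w ++ [c]) := by
    rw [win_add x _ 1 _, win_one, win_add x _ (k' + k) 1, win_one]
    have e1 : -(k' : ℤ) - 1 + ((1 : ℕ) : ℤ) = -(k' : ℤ) := by push_cast; ring
    have e2 : -(k' : ℤ) + ((k' + k : ℕ) : ℤ) = (k : ℤ) := by push_cast; ring
    rw [e1, e2]
    simp [hw, ha, hc]
  have h1 : a :: (w ++ [c]) ∈ L := by rw [← hwin]; exact hx _ _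
  have hwxy : w = win y (-(k' : ℤ)) (k' + k) := by
    rw [hw, win, win]
    congr 1
    funext i
    by_cases hik : (i : ℕ) < k'
    · have e : -(k' : ℤ) + ((i : ℕ) : ℤ) = -(((k' - 1 - (i : ℕ) : ℕ) : ℕ) : ℤ) - 1 := by omega
      rw [e]
      exact hpreL _ (by omega)
    · have e : -(k' : ℤ) + ((i : ℕ) : ℤ) = (((((i : ℕ) - k' : ℕ)) : ℕ) : ℤ) := by omega
      rw [e]
      exact hpreR _ (by have := i.isLt; omega)
  have hwin' : win y (-(k' : ℤ) - 1) (1 + ((k' + k) + 1)) = b :: (win y (-(k' : ℤ)) (k' + k) ++ [d]) := by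
    rw [win_add y _ 1 _, win_one, win_add y _ (k' + k) 1, win_one]
    have e1 : -(k' : ℤ) - 1 + ((1 : ℕ) : ℤ) = -(k' : ℤ) := by push_cast; ring
    have e2 : -(k' : ℤ) + ((k' + k : ℕ) : ℤ) = (k : ℤ) := by push_cast; ring
    rw [e1, e2]
    simp [hb, hd]
  have h2 : b :: (w ++ [d]) ∈ L := by rw [hwxy, ← hwin']; exact hy _ _
  -- bispeciality
  have haw : a :: w ∈ L := hL1 _ h1 _ ⟨[], [c], by simp⟩
  have hbw : b :: w ∈ L := hL1 _ h2 _ ⟨[], [d], by simp⟩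
  have hwc : w ++ [c] ∈ L := hL1 _ h1 _ ⟨[a], [], by simp⟩
  have hwd : w ++ [d] ∈ L := hL1 _ h2 _ ⟨[b], [], by simp⟩
  have hbis : Bispecial L w := by
    constructor
    · have hsub : ({a, b} : Set A) ⊆ arrSet L w := by
        rintro z (rfl | rfl)
        · exact haw
        · exact hbw
      have h2' : ({a, b} : Set A).ncard = 2 := Set.ncard_pair hab
      have := Set.ncard_le_ncard hsub (Set.toFinite _)
      omega
    · have hsub : ({c, d} : Set A) ⊆ depSet L w := by
        rintro z (rfl | rfl)
        · exact hwc
        · exact hwd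
      have h2' : ({c, d} : Set A).ncard = 2 := Set.ncard_pair hcd
      have := Set.ncard_le_ncard hsub (Set.toFinite _)
      omega
  have e1 := hoc w hbis a b c d hab hcd h1 h2
  -- counting F-letters in w
  have hcount : w.countP (fun e => decide (e ∈ F)) =
      ((Finset.range k').filter (fun i : ℕ => x (-(i : ℤ) - 1) ∈ F)).card
        + ((Finset.range k).filter (fun i : ℕ => x ((i : ℕ) : ℤ) ∈ F)).card := by
    rw [hw, win_add]
    have e0 : -(k' : ℤ) + ((k' : ℕ) : ℤ) = 0 := by omega
    rw [e0, List.countP_append]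
    congr 1
    · rw [win, countP_ofFn]
      rw [Finset.card_filter, ← Fin.sum_univ_eq_sum_range]
      apply Fintype.sum_bijective (Fin.rev) Fin.rev_bijective
      intro i
      have e : -(k' : ℤ) + ((i : ℕ) : ℤ) = -(((Fin.rev i : Fin k') : ℕ) : ℤ) - 1 := by
        have h1' := i.isLt
        have h2' : ((Fin.rev i : Fin k') : ℕ) = k' - ((i : ℕ) + 1) := Fin.val_rev i
        omega
      rw [e]
      simp
    · rw [win, countP_ofFn]
      rw [Finset.card_filter, ← Fin.sum_univ_eq_sum_range]
      apply Finset.sum_congr rfl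
      intro i _
      have e : (0 : ℤ) + ((i : ℕ) : ℤ) = ((i : ℕ) : ℤ) := by omega
      rw [e]
      simp
  rw [hcount] at e1
  -- characterizations of the two comparisons
  have hRchar := sltF_iff_at (F := F) hD hdr
  have hLchar := sltF_iff_at (F := F) hA hdl
  rw [← hk] at hRchar
  rw [← hk'] at hLchar
  rw [← hc, ← hd] at hRchar
  rw [← ha, ← hb] at hLchar
  rw [hRchar, hLchar]
  simp only [Nat.even_add] at e1
  have hrevA : rA b a ↔ ¬ rA a b := sto_rev_iff hA hab
  have hrevD : rD d c ↔ ¬ rD c d := sto_rev_iff hD hcd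
  clear hwin hwin' hcount hRchar hLchar hpreR hpreL hx hy h1 h2 haw hbw hwc hwd hbis hwxy hoc hL1
  split_ifs at e1 ⊢ with h1' h2' h3' <;> tauto

end Consistency


section Topology

set_option linter.unusedSectionVars false

variable {A : Type*} [DecidableEq A] [TopologicalSpace A] [DiscreteTopology A]

lemma isClosed_XL (L : Set (List A)) : IsClosed (XL L) := by
  have hXL : XL L = ⋂ (m : ℤ), ⋂ (n : ℕ),
      {x : ℤ → A | (List.ofFn fun i : Fin n => x (m + (i : ℕ))) ∈ L} := by
    ext x
    simp only [Set.mem_iInter, Set.mem_setOf_eq]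
    exact Iff.rfl
  rw [hXL]
  refine isClosed_iInter fun m => isClosed_iInter fun n => ?_
  have : {x : ℤ → A | (List.ofFn fun i : Fin n => x (m + (i : ℕ))) ∈ L}
      = (fun (x : ℤ → A) (i : Fin n) => x (m + (i : ℕ))) ⁻¹' {g | List.ofFn g ∈ L} := rfl
  rw [this]
  exact (isClosed_discrete _).preimage (continuous_pi fun i => continuous_apply _)

lemma flipLT_locality {F : Finset A} {rA rD : A → A → Prop} {x y : ℤ → A}
    (h : flipLT F rA rD x y) :
    ∃ s : Finset ℤ, ∀ x' y' : ℤ → A, (∀ i ∈ s, x' i = x i) → (∀ i ∈ s, y' i = y i) →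
      flipLT F rA rD x' y' := by
  rcases h with ⟨k, hpre, hne, hcmp⟩ | ⟨k, hpre, hne, hcmp⟩
  · refine ⟨(Finset.range (k + 1)).image (fun i : ℕ => (i : ℤ)), ?_⟩
    intro x' y' hx' hy'
    have hmem : ∀ i : ℕ, i ≤ k →
        (i : ℤ) ∈ (Finset.range (k + 1)).image (fun i : ℕ => (i : ℤ)) := fun i hi =>
      Finset.mem_image.mpr ⟨i, Finset.mem_range.mpr (by omega), rfl⟩
    have hx'' : ∀ i : ℕ, i ≤ k → x' (i : ℤ) = x (i : ℤ) := fun i hi => hx' _ (hmem i hi)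
    have hy'' : ∀ i : ℕ, i ≤ k → y' (i : ℤ) = y (i : ℤ) := fun i hi => hy' _ (hmem i hi)
    refine Or.inl ⟨k, fun i hi => ?_, ?_, ?_⟩
    · rw [hx'' i (le_of_lt hi), hy'' i (le_of_lt hi)]; exact hpre i hi
    · rw [hx'' k le_rfl, hy'' k le_rfl]; exact hne
    · have hcard := filterF_congr_of_eq (F := F)
        (u := fun i : ℕ => x' (i : ℤ)) (v := fun i : ℕ => x (i : ℤ))
        (k := k) (fun i hi => hx'' i (le_of_lt hi))
      rw [hcard, hx'' k le_rfl, hy'' k le_rfl]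
      exact hcmp
  · refine ⟨(Finset.range (k + 1)).image (fun i : ℕ => -(i : ℤ) - 1), ?_⟩
    intro x' y' hx' hy'
    have hmem : ∀ i : ℕ, i ≤ k →
        -(i : ℤ) - 1 ∈ (Finset.range (k + 1)).image (fun i : ℕ => -(i : ℤ) - 1) := fun i hi =>
      Finset.mem_image.mpr ⟨i, Finset.mem_range.mpr (by omega), rfl⟩
    have hx'' : ∀ i : ℕ, i ≤ k → x' (-(i : ℤ) - 1) = x (-(i : ℤ) - 1) := fun i hi =>
      hx' _ (hmem i hi)
    have hy'' : ∀ i : ℕ, i ≤ k → y' (-(i : ℤ) - 1) = y (-(i : ℤ) - 1) := fun i hi =>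
      hy' _ (hmem i hi)
    refine Or.inr ⟨k, fun i hi => ?_, ?_, ?_⟩
    · rw [hx'' i (le_of_lt hi), hy'' i (le_of_lt hi)]; exact hpre i hi
    · rw [hx'' k le_rfl, hy'' k le_rfl]; exact hne
    · have hcard := filterF_congr_of_eq (F := F)
        (u := fun i : ℕ => x' (-(i : ℤ) - 1)) (v := fun i : ℕ => x (-(i : ℤ) - 1))
        (k := k) (fun i hi => hx'' i (le_of_lt hi))
      rw [hcard, hx'' k le_rfl, hy'' k le_rfl]
      exact hcmp

lemma isOpen_cyl (x : ℤ → A) (s : Finset ℤ) :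
    IsOpen {z : ℤ → A | ∀ i ∈ s, z i = x i} := by
  have : {z : ℤ → A | ∀ i ∈ s, z i = x i} = ⋂ i ∈ s, (fun z : ℤ → A => z i) ⁻¹' {x i} := by
    ext z; simp
  rw [this]
  exact isOpen_biInter_finset fun i _ =>
    (continuous_apply i).isOpen_preimage _ (isOpen_discrete _)

lemma isOpen_flipLT_fst (F : Finset A) (rA rD : A → A → Prop) (y : ℤ → A) :
    IsOpen {x : ℤ → A | flipLT F rA rD x y} := by
  rw [isOpen_iff_forall_mem_open]
  intro x hx
  obtain ⟨s, hs⟩ := flipLT_locality hx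
  exact ⟨{z : ℤ → A | ∀ i ∈ s, z i = x i},
    fun z hz => hs z y hz (fun i _ => rfl), isOpen_cyl x s, fun i _ => rfl⟩

lemma isOpen_flipLT_snd (F : Finset A) (rA rD : A → A → Prop) (y : ℤ → A) :
    IsOpen {x : ℤ → A | flipLT F rA rD y x} := by
  rw [isOpen_iff_forall_mem_open]
  intro x hx
  obtain ⟨s, hs⟩ := flipLT_locality hx
  exact ⟨{z : ℤ → A | ∀ i ∈ s, z i = x i},
    fun z hz => hs y z (fun i _ => rfl) hz, isOpen_cyl x s, fun i _ => rfl⟩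

end Topology

section CompactMin

lemma finset_exists_min {α : Type*} {S : Set α} (lt : α → α → Prop)
    (hirr : ∀ x ∈ S, ¬ lt x x)
    (htr : ∀ x ∈ S, ∀ y ∈ S, ∀ z ∈ S, lt x y → lt y z → lt x z) :
    ∀ t : Finset {x // x ∈ S}, t.Nonempty → ∃ m ∈ t, ∀ i ∈ t, ¬ lt (i : α) (m : α) := by
  classical
  intro t
  induction t using Finset.induction_on with
  | empty => intro h; simp at h
  | @insert a t' ha ih =>
      intro _
      by_cases htne' : t'.Nonempty
      · obtain ⟨m, hmt, hmin⟩ := ih htne'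
        by_cases hlt : lt (a : α) (m : α)
        · refine ⟨a, Finset.mem_insert_self _ _, ?_⟩
          intro i hi
          rcases Finset.mem_insert.mp hi with hi0 | hi'
          · exact fun hia => hirr _ a.2 (hi0 ▸ hia)
          · exact fun hia => hmin i hi' (htr _ i.2 _ a.2 _ m.2 hia hlt)
        · refine ⟨m, Finset.mem_insert_of_mem hmt, ?_⟩
          intro i hi
          rcases Finset.mem_insert.mp hi with hi0 | hi'
          · exact fun hia => hlt (hi0 ▸ hia)
          · exact hmin i hi'
      · rw [Finset.not_nonempty_iff_eq_empty] at htne'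
        subst htne'
        refine ⟨a, Finset.mem_insert_self _ _, ?_⟩
        intro i hi
        rcases Finset.mem_insert.mp hi with hi0 | hi'
        · exact fun hia => hirr _ a.2 (hi0 ▸ hia)
        · exact absurd hi' (Finset.notMem_empty _)

/-- A compact set, linearly ordered by an order with open rays, has a least element. -/
lemma compact_exists_min {α : Type*} [TopologicalSpace α] {S : Set α} (hc : IsCompact S)
    (hne : S.Nonempty) (lt : α → α → Prop)
    (hirr : ∀ x ∈ S, ¬ lt x x)
    (htr : ∀ x ∈ S, ∀ y ∈ S, ∀ z ∈ S, lt x y → lt y z → lt x z)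
    (htot : ∀ x ∈ S, ∀ y ∈ S, x = y ∨ lt x y ∨ lt y x)
    (hopen : ∀ y : α, IsOpen {z | lt y z}) :
    ∃ u ∈ S, ∀ v ∈ S, u = v ∨ lt u v := by
  by_contra hcon
  push_neg at hcon
  have hcov : S ⊆ ⋃ (y : {x // x ∈ S}), {z | lt (y : α) z} := by
    intro u hu
    obtain ⟨v, hv, hne', hnlt⟩ := hcon u hu
    rcases htot u hu v hv with h | h | h
    · exact absurd h hne'
    · exact absurd h hnlt
    · exact Set.mem_iUnion.mpr ⟨⟨v, hv⟩, h⟩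
  obtain ⟨t, ht⟩ := hc.elim_finite_subcover
    (fun y : {x // x ∈ S} => {z | lt (y : α) z}) (fun y => hopen _) hcov
  have htne : t.Nonempty := by
    obtain ⟨u, hu⟩ := hne
    obtain ⟨i, hit, -⟩ := Set.mem_iUnion₂.mp (ht hu)
    exact ⟨i, hit⟩
  obtain ⟨m, hmt, hmin⟩ := finset_exists_min lt hirr htr t htne
  obtain ⟨i, hit, hilt⟩ := Set.mem_iUnion₂.mp (ht m.2)
  exact hmin i hit hilt

end CompactMin

/-- under an `F`-flipped order condition, `flipLT` is a total
(strict) order on `X_L`, and every nonempty subset of `X_L` has a least upper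
bound and a greatest lower bound in `X_L`. -/
theorem stmt6 [Fintype A] [DecidableEq A] (L : Set (List A)) (hL : IsLanguage L)
    (F : Finset A) (rA rD : A → A → Prop)
    (hA : IsStrictTotalOrder A rA) (hD : IsStrictTotalOrder A rD)
    (hoc : FlippedOC L F rA rD) :
    (∀ x ∈ XL L, ∀ y ∈ XL L,
        x = y ∨ flipLT F rA rD x y ∨ flipLT F rA rD y x) ∧
    (∀ x ∈ XL L, ¬ flipLT F rA rD x x) ∧
    (∀ x ∈ XL L, ∀ y ∈ XL L, ∀ z ∈ XL L,
        flipLT F rA rD x y → flipLT F rA rD y z → flipLT F rA rD x z) ∧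
    (∀ Y : Set (ℤ → A), Y ⊆ XL L → Y.Nonempty →
      (∃ u ∈ XL L, (∀ y ∈ Y, y = u ∨ flipLT F rA rD y u) ∧
        ∀ v ∈ XL L, (∀ y ∈ Y, y = v ∨ flipLT F rA rD y v) →
          (u = v ∨ flipLT F rA rD u v)) ∧
      (∃ u ∈ XL L, (∀ y ∈ Y, y = u ∨ flipLT F rA rD u y) ∧
        ∀ v ∈ XL L, (∀ y ∈ Y, y = v ∨ flipLT F rA rD v y) →
          (u = v ∨ flipLT F rA rD v u))) := by
  classical
  -- irreflexivity (no hypotheses needed)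
  have hirr : ∀ x : ℤ → A, ¬ flipLT F rA rD x x := by
    rintro x (⟨k, -, hk, -⟩ | ⟨k, -, hk, -⟩) <;> exact hk rfl
  -- totality (no order condition needed)
  have htot : ∀ x y : ℤ → A, x ≠ y → flipLT F rA rD x y ∨ flipLT F rA rD y x := by
    intro x y hxy
    have hex : ∃ n : ℤ, x n ≠ y n := by
      by_contra h; push_neg at h; exact hxy (funext h)
    obtain ⟨n, hn⟩ := hex
    rcases le_or_gt 0 n with h0 | h0
    · have hd : ∃ m : ℕ, x ((m : ℕ) : ℤ) ≠ y ((m : ℕ) : ℤ) := by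
        refine ⟨n.toNat, ?_⟩
        rwa [Int.toNat_of_nonneg h0]
      rcases sltF_total (F := F) hD hd with h | h
      · exact Or.inl (Or.inl h)
      · exact Or.inr (Or.inl h)
    · have hd : ∃ m : ℕ, x (-((m : ℕ) : ℤ) - 1) ≠ y (-((m : ℕ) : ℤ) - 1) := by
        refine ⟨(-n - 1).toNat, ?_⟩
        have he : -(((-n - 1).toNat : ℕ) : ℤ) - 1 = n := by omega
        rwa [he]
      rcases sltF_total (F := F) hA hd with h | h
      · exact Or.inl (Or.inr h)
      · exact Or.inr (Or.inr h)
  -- transitivity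
  have htrans : ∀ x ∈ XL L, ∀ y ∈ XL L, ∀ z ∈ XL L,
      flipLT F rA rD x y → flipLT F rA rD y z → flipLT F rA rD x z := by
    intro x hx y hy z hz hxy hyz
    have hxy' : sltF F rD (fun n : ℕ => x ((n : ℕ) : ℤ)) (fun n : ℕ => y ((n : ℕ) : ℤ)) ∨
        sltF F rA (fun n : ℕ => x (-((n : ℕ) : ℤ) - 1)) (fun n : ℕ => y (-((n : ℕ) : ℤ) - 1)) := hxy
    have hyz' : sltF F rD (fun n : ℕ => y ((n : ℕ) : ℤ)) (fun n : ℕ => z ((n : ℕ) : ℤ)) ∨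
        sltF F rA (fun n : ℕ => y (-((n : ℕ) : ℤ) - 1)) (fun n : ℕ => z (-((n : ℕ) : ℤ) - 1)) := hyz
    by_cases hdr_xy : ∃ n : ℕ, x ((n : ℕ) : ℤ) ≠ y ((n : ℕ) : ℤ)
    · have Rxy : sltF F rD (fun n : ℕ => x ((n : ℕ) : ℤ)) (fun n : ℕ => y ((n : ℕ) : ℤ)) := by
        rcases hxy' with h | h
        · exact h
        · exact (consistency hL hA hD hoc hx hy hdr_xy (sltF_diff h)).mpr h
      by_cases hdr_yz : ∃ n : ℕ, y ((n : ℕ) : ℤ) ≠ z ((n : ℕ) : ℤ)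
      · have Ryz : sltF F rD (fun n : ℕ => y ((n : ℕ) : ℤ)) (fun n : ℕ => z ((n : ℕ) : ℤ)) := by
          rcases hyz' with h | h
          · exact h
          · exact (consistency hL hA hD hoc hy hz hdr_yz (sltF_diff h)).mpr h
        exact Or.inl (sltF_trans hD Rxy Ryz)
      · push_neg at hdr_yz
        have he : (fun n : ℕ => z ((n : ℕ) : ℤ)) = fun n : ℕ => y ((n : ℕ) : ℤ) :=
          funext fun n => (hdr_yz n).symm
        refine Or.inl ?_
        show sltF F rD (fun n : ℕ => x ((n : ℕ) : ℤ)) (fun n : ℕ => z ((n : ℕ) : ℤ))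
        rw [he]
        exact Rxy
    · push_neg at hdr_xy
      have he : (fun n : ℕ => x ((n : ℕ) : ℤ)) = fun n : ℕ => y ((n : ℕ) : ℤ) :=
        funext hdr_xy
      by_cases hdr_yz : ∃ n : ℕ, y ((n : ℕ) : ℤ) ≠ z ((n : ℕ) : ℤ)
      · have Ryz : sltF F rD (fun n : ℕ => y ((n : ℕ) : ℤ)) (fun n : ℕ => z ((n : ℕ) : ℤ)) := by
          rcases hyz' with h | h
          · exact h
          · exact (consistency hL hA hD hoc hy hz hdr_yz (sltF_diff h)).mpr h
        refine Or.inl ?_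
        show sltF F rD (fun n : ℕ => x ((n : ℕ) : ℤ)) (fun n : ℕ => z ((n : ℕ) : ℤ))
        rw [he]
        exact Ryz
      · push_neg at hdr_yz
        have Lxy : sltF F rA (fun n : ℕ => x (-((n : ℕ) : ℤ) - 1))
            (fun n : ℕ => y (-((n : ℕ) : ℤ) - 1)) := by
          rcases hxy' with h | h
          · obtain ⟨n, hn⟩ := sltF_diff h
            exact absurd (hdr_xy n) hn
          · exact h
        have Lyz : sltF F rA (fun n : ℕ => y (-((n : ℕ) : ℤ) - 1))
            (fun n : ℕ => z (-((n : ℕ) : ℤ) - 1)) := by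
          rcases hyz' with h | h
          · obtain ⟨n, hn⟩ := sltF_diff h
            exact absurd (hdr_yz n) hn
          · exact h
        exact Or.inr (sltF_trans hA Lxy Lyz)
  have hasymm : ∀ x ∈ XL L, ∀ y ∈ XL L,
      flipLT F rA rD x y → flipLT F rA rD y x → False := fun x hx y hy h1 h2 =>
    hirr x (htrans x hx y hy x hx h1 h2)
  refine ⟨?_, fun x _ => hirr x, htrans, ?_⟩
  · intro x _ y _
    rcases eq_or_ne x y with rfl | hne
    · exact Or.inl rfl
    · exact Or.inr (htot x y hne)
  -- suprema and infima
  intro Y hYX hYne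
  letI : TopologicalSpace A := ⊥
  haveI : DiscreteTopology A := ⟨rfl⟩
  haveI : CompactSpace A := Finite.compactSpace
  have hXLclosed : IsClosed (XL L) := isClosed_XL L
  have hXLc : IsCompact (XL L) := hXLclosed.isCompact
  obtain ⟨y₀, hy₀⟩ := hYne
  have hy₀X : y₀ ∈ XL L := hYX hy₀
  constructor
  · -- least upper bound
    set U : Set (ℤ → A) := {v | v ∈ XL L ∧ ∀ y ∈ Y, ¬ flipLT F rA rD v y} with hU
    have hUclosed : IsClosed U := by
      have : U = XL L ∩ ⋂ y ∈ Y, {v | flipLT F rA rD v y}ᶜ := by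
        ext v
        simp only [hU, Set.mem_setOf_eq, Set.mem_inter_iff, Set.mem_iInter, Set.mem_compl_iff]
      rw [this]
      exact hXLclosed.inter (isClosed_biInter fun y hy =>
        (isOpen_flipLT_fst F rA rD y).isClosed_compl)
    have hUc : IsCompact U := hUclosed.isCompact
    obtain ⟨M, hMX, hMmax⟩ := compact_exists_min hXLc ⟨y₀, hy₀X⟩
      (fun a b => flipLT F rA rD b a) (fun x _ => hirr x)
      (fun x hx y hy z hz h1 h2 => htrans z hz y hy x hx h2 h1)
      (fun x hx y hy => by
        rcases eq_or_ne x y with rfl | hne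
        · exact Or.inl rfl
        · exact Or.inr ((htot x y hne).symm))
      (fun y => isOpen_flipLT_fst F rA rD y)
    have hMU : M ∈ U := by
      refine ⟨hMX, fun y hy hlt => ?_⟩
      rcases hMmax y (hYX hy) with rfl | h
      · exact hirr _ hlt
      · exact hasymm M hMX y (hYX hy) hlt h
    obtain ⟨u, hu, humin⟩ := compact_exists_min hUc ⟨M, hMU⟩ (flipLT F rA rD)
      (fun x _ => hirr x)
      (fun x hx y hy z hz => htrans x hx.1 y hy.1 z hz.1)
      (fun x hx y hy => by
        rcases eq_or_ne x y with rfl | hne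
        · exact Or.inl rfl
        · exact Or.inr (htot x y hne))
      (fun y => isOpen_flipLT_snd F rA rD y)
    refine ⟨u, hu.1, ?_, ?_⟩
    · intro y hy
      rcases eq_or_ne y u with rfl | hne
      · exact Or.inl rfl
      rcases htot y u hne with h | h
      · exact Or.inr h
      · exact absurd h (hu.2 y hy)
    · intro v hvX hvub
      have hvU : v ∈ U := by
        refine ⟨hvX, fun y hy hlt => ?_⟩
        rcases hvub y hy with rfl | h
        · exact hirr _ hlt
        · exact hasymm v hvX y (hYX hy) hlt h
      exact humin v hvU
  · -- greatest lower bound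
    set W : Set (ℤ → A) := {v | v ∈ XL L ∧ ∀ y ∈ Y, ¬ flipLT F rA rD y v} with hW
    have hWclosed : IsClosed W := by
      have : W = XL L ∩ ⋂ y ∈ Y, {v | flipLT F rA rD y v}ᶜ := by
        ext v
        simp only [hW, Set.mem_setOf_eq, Set.mem_inter_iff, Set.mem_iInter, Set.mem_compl_iff]
      rw [this]
      exact hXLclosed.inter (isClosed_biInter fun y hy =>
        (isOpen_flipLT_snd F rA rD y).isClosed_compl)
    have hWc : IsCompact W := hWclosed.isCompact
    obtain ⟨M, hMX, hMmin⟩ := compact_exists_min hXLc ⟨y₀, hy₀X⟩ (flipLT F rA rD)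
      (fun x _ => hirr x)
      (fun x hx y hy z hz => htrans x hx y hy z hz)
      (fun x hx y hy => by
        rcases eq_or_ne x y with rfl | hne
        · exact Or.inl rfl
        · exact Or.inr (htot x y hne))
      (fun y => isOpen_flipLT_snd F rA rD y)
    have hMW : M ∈ W := by
      refine ⟨hMX, fun y hy hlt => ?_⟩
      rcases hMmin y (hYX hy) with rfl | h
      · exact hirr _ hlt
      · exact hasymm y (hYX hy) M hMX hlt h
    obtain ⟨u, hu, humax⟩ := compact_exists_min hWc ⟨M, hMW⟩ (fun a b => flipLT F rA rD b a)
      (fun x _ => hirr x)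
      (fun x hx y hy z hz h1 h2 => htrans z hz.1 y hy.1 x hx.1 h2 h1)
      (fun x hx y hy => by
        rcases eq_or_ne x y with rfl | hne
        · exact Or.inl rfl
        · exact Or.inr ((htot x y hne).symm))
      (fun y => isOpen_flipLT_fst F rA rD y)
    refine ⟨u, hu.1, ?_, ?_⟩
    · intro y hy
      rcases eq_or_ne y u with rfl | hne
      · exact Or.inl rfl
      rcases htot u y hne.symm with h | h
      · exact Or.inr h
      · exact absurd h (hu.2 y hy)
    · intro v hvX hvlb
      have hvW : v ∈ W := by
        refine ⟨hvX, fun y hy hlt => ?_⟩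
        rcases hvlb y hy with rfl | h
        · exact hirr _ hlt
        · exact hasymm y (hYX hy) v hvX hlt h
      exact humax v hvW
end

section
/- Let L be a recurrent language with no locally strong bispecial word. If w' and w are nonempty words with |w'| ≤ |w| and w'wⁿ ∈ L for all n ∈ ℕ, then w' is a suffix of w; likewise if wⁿw' ∈ L for all n, then w' is a prefix of w. -/
open List Set

variable {A : Type*}

variable {F : Finset A}

namespace Stmt7Aux


def pw (w : List A) (n : ℕ) : List A := (List.replicate n w).flatten

lemma pw_zero (w : List A) : pw w 0 = [] := rfl

lemma pw_succ (w : List A) (n : ℕ) : pw w (n+1) = w ++ pw w n := by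
  simp [pw, List.replicate_succ]

lemma pw_succ' (w : List A) (n : ℕ) : pw w (n+1) = pw w n ++ w := by
  simp [pw, List.replicate_succ', List.flatten_append]

lemma pw_add (w : List A) (m n : ℕ) : pw w (m+n) = pw w m ++ pw w n := by
  induction n with
  | zero => simp [pw_zero]
  | succ n ih => rw [← Nat.add_assoc, pw_succ', ih, pw_succ', List.append_assoc]

lemma pw_one (w : List A) : pw w 1 = w := by simp [pw]

lemma pw_length (w : List A) (n : ℕ) : (pw w n).length = n * w.length := by
  induction n with
  | zero => simp [pw_zero]
  | succ n ih => rw [pw_succ, List.length_append, ih]; ring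

lemma pw_reverse (w : List A) (n : ℕ) : (pw w.reverse n).reverse = pw w n := by
  induction n with
  | zero => rfl
  | succ n ih => rw [pw_succ, List.reverse_append, ih, List.reverse_reverse, pw_succ']

lemma nat_stab (g : ℕ → ℕ) (hg : ∀ m n, m ≤ n → g n ≤ g m) :
    ∃ N, ∀ m, N ≤ m → g m = g N := by
  obtain ⟨N, hN⟩ : sInf (Set.range g) ∈ Set.range g :=
    Nat.sInf_mem (Set.range_nonempty g)
  exact ⟨N, fun m hm => le_antisymm (hg N m hm) (hN ▸ Nat.sInf_le ⟨m, rfl⟩)⟩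

lemma set_stab [Fintype A] (f : ℕ → Set A) (hf : ∀ m, f (m+1) ⊆ f m) :
    ∃ N, ∀ m, N ≤ m → f m = f N := by
  have mono : ∀ m n, m ≤ n → f n ⊆ f m := by
    intro m n h
    induction h with
    | refl => exact subset_rfl
    | step _ ih => exact (hf _).trans ih
  obtain ⟨N, hN⟩ := nat_stab (fun m => (f m).ncard)
    (fun m n h => Set.ncard_le_ncard (mono m n h) (Set.toFinite _))
  exact ⟨N, fun m hm =>
    Set.eq_of_subset_of_ncard_le (mono N m hm) (le_of_eq (hN m hm).symm) (Set.toFinite _)⟩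

lemma first_diff : ∀ {x y : List A}, x.length = y.length → x ≠ y →
    ∃ (r u u' : List A) (a b : A), a ≠ b ∧ x = r ++ a :: u ∧ y = r ++ b :: u' := by
  intro x
  induction x with
  | nil =>
    intro y hlen hne
    cases y with
    | nil => exact absurd rfl hne
    | cons d y' => simp at hlen
  | cons c x' ih =>
    intro y hlen hne
    cases y with
    | nil => simp at hlen
    | cons d y' =>
      by_cases hcd : c = d
      · subst hcd
        have hne' : x' ≠ y' := fun h => hne (by rw [h])
        obtain ⟨r, u, u', a, b, hab, hx, hy⟩ := ih (by simpa using hlen) hne'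
        exact ⟨c :: r, u, u', a, b, hab, by simp [hx], by simp [hy]⟩
      · exact ⟨[], x', y', c, d, hcd, rfl, rfl⟩

lemma last_diff {x y : List A} (hlen : x.length = y.length) (hne : x ≠ y) :
    ∃ (s p q : List A) (a b : A), a ≠ b ∧ x = p ++ a :: s ∧ y = q ++ b :: s := by
  have hlen' : x.reverse.length = y.reverse.length := by simpa using hlen
  have hne' : x.reverse ≠ y.reverse := fun h => hne (by
    have := congrArg List.reverse h; simpa using this)
  obtain ⟨r, u, u', a, b, hab, hx, hy⟩ := first_diff hlen' hne'
  refine ⟨r.reverse, u.reverse, u'.reverse, a, b, hab, ?_, ?_⟩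
  · have := congrArg List.reverse hx
    simpa using this
  · have := congrArg List.reverse hy
    simpa using this

lemma prefix_pw {w : List A} (hw : w ≠ []) :
    ∀ (k : ℕ) (t : List A), t <+: pw w k → ∃ q j, j < w.length ∧ t = pw w q ++ w.take j := by
  intro k
  induction k with
  | zero =>
    intro t ht
    rw [pw_zero] at ht
    have : t = [] := List.prefix_nil.mp ht
    exact ⟨0, 0, List.length_pos_iff.mpr hw, by simp [pw_zero, this]⟩
  | succ k ih =>
    intro t ht
    rw [pw_succ] at ht
    by_cases hl : t.length < w.length
    · refine ⟨0, t.length, hl, ?_⟩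
      have h1 : t = (w ++ pw w k).take t.length := List.prefix_iff_eq_take.mp ht
      rw [List.take_append_of_le_length (le_of_lt hl)] at h1
      simpa [pw_zero] using h1
    · push_neg at hl
      have hw_pref : w <+: t :=
        List.prefix_of_prefix_length_le (List.prefix_append w _) ht hl
      obtain ⟨t', rfl⟩ := hw_pref
      have ht' : t' <+: pw w k := (List.prefix_append_right_inj w).mp ht
      obtain ⟨q, j, hj, rfl⟩ := ih t' ht'
      exact ⟨q+1, j, hj, by rw [pw_succ, List.append_assoc]⟩

lemma pw_getElem? {w : List A} (hw : 0 < w.length) :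
    ∀ (k i : ℕ), i < k * w.length → (pw w k)[i]? = w[i % w.length]? := by
  intro k
  induction k with
  | zero => intro i hi; omega
  | succ k ih =>
    intro i hi
    rw [pw_succ]
    by_cases h : i < w.length
    · rw [List.getElem?_append_left h, Nat.mod_eq_of_lt h]
    · push_neg at h
      rw [List.getElem?_append_right h, ih _ (by rw [Nat.succ_mul] at hi; omega),
        Nat.mod_eq_sub_mod h]


lemma four_edges [Fintype A] {L : Set (List A)} (hL : IsLanguage L)
    (hns : ∀ v : List A, ¬ LocallyStrongBispecial L v)
    (W : List A) {a b c d : A} (hab : a ≠ b) (hcd : c ≠ d)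
    (h1 : a :: (W ++ [c]) ∈ L) (h2 : a :: (W ++ [d]) ∈ L)
    (h3 : b :: (W ++ [c]) ∈ L) (h4 : b :: (W ++ [d]) ∈ L) : False := by
  apply hns W
  have hAsub : ({a, b} : Set A) ⊆ arrSet L W := by
    intro x hx
    have hpre : ∀ (y : A), y :: W <+: y :: (W ++ [c]) := by
      intro y; exact ⟨[c], by simp⟩
    rcases hx with rfl | rfl
    · exact hL.1 _ h1 _ (hpre x).isInfix
    · exact hL.1 _ h3 _ (hpre x).isInfix
  have hDsub : ({c, d} : Set A) ⊆ depSet L W := by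
    intro x hx
    rcases hx with rfl | rfl
    · exact hL.1 _ h1 _ ((List.suffix_cons a _).isInfix)
    · exact hL.1 _ h2 _ ((List.suffix_cons a _).isInfix)
  have hA2 : 1 < (arrSet L W).ncard := by
    have h2' : ({a, b} : Set A).ncard = 2 := Set.ncard_pair hab
    have := Set.ncard_le_ncard hAsub (Set.toFinite _)
    omega
  have hD2 : 1 < (depSet L W).ncard := by
    have h2' : ({c, d} : Set A).ncard = 2 := Set.ncard_pair hcd
    have := Set.ncard_le_ncard hDsub (Set.toFinite _)
    omega
  refine ⟨⟨hA2, hD2⟩, {a, b}, {c, d}, ⟨a, by simp⟩, ⟨c, by simp⟩, hAsub, hDsub, ?_⟩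
  rw [Set.ncard_pair hab, Set.ncard_pair hcd]
  have hsub : ({(a,c),(a,d),(b,c),(b,d)} : Set (A × A)) ⊆
      {p : A × A | p.1 ∈ ({a, b} : Set A) ∧ p.2 ∈ ({c, d} : Set A) ∧ p.1 :: (W ++ [p.2]) ∈ L} := by
    rintro ⟨x, y⟩ hp
    simp only [Set.mem_insert_iff, Set.mem_singleton_iff, Prod.mk.injEq] at hp
    rcases hp with ⟨rfl, rfl⟩ | ⟨rfl, rfl⟩ | ⟨rfl, rfl⟩ | ⟨rfl, rfl⟩ <;>
      exact ⟨by simp, by simp, by assumption⟩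
  have hcard : ({(a,c),(a,d),(b,c),(b,d)} : Set (A × A)).ncard = 4 := by
    rw [Set.ncard_insert_of_notMem (by simp [Prod.ext_iff, hab, hcd]) (Set.toFinite _),
        Set.ncard_insert_of_notMem (by simp [Prod.ext_iff, hab, hcd]) (Set.toFinite _),
        Set.ncard_insert_of_notMem (by simp [Prod.ext_iff, hab, hcd]) (Set.toFinite _),
        Set.ncard_singleton]
  have := Set.ncard_le_ncard hsub (Set.toFinite _)
  omega

lemma main_suffix [Fintype A] (L : Set (List A)) (hL : IsLanguage L)
    (hrec : LangRecurrent L) (hns : ∀ v : List A, ¬ LocallyStrongBispecial L v)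
    (w w' : List A) (hw : w ≠ []) (hlen : w'.length ≤ w.length)
    (H : ∀ n : ℕ, w' ++ pw w n ∈ L) : w' <:+ w := by
  by_contra hcon
  have hwpos : 0 < w.length := List.length_pos_iff.mpr hw
  have hmemL : ∀ {x y : List A}, y ∈ L → x <:+: y → x ∈ L := fun hy hx => hL.1 _ hy _ hx
  -- the matching suffix of w
  have hvsuf : w.drop (w.length - w'.length) <:+ w := List.drop_suffix _ _
  have hvlen : (w.drop (w.length - w'.length)).length = w'.length := by
    rw [List.length_drop]; omega
  have hvne : w' ≠ w.drop (w.length - w'.length) := fun h => hcon (h ▸ hvsuf)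
  obtain ⟨s, p, q, a, b, hab, hx, hy⟩ := last_diff hvlen.symm hvne
  have hbs : (b :: s) <:+ w := List.IsSuffix.trans ⟨q, hy.symm⟩ hvsuf
  obtain ⟨e, he⟩ := hbs
  have helen : e.length + 1 + s.length = w.length := by
    have := congrArg List.length he; simp at this; omega
  -- basic memberships
  have F0 : ∀ n, pw w n ∈ L := fun n => hmemL (H n) ((List.suffix_append w' _).isInfix)
  have F1 : ∀ n, a :: (s ++ pw w n) ∈ L := by
    intro n
    refine hmemL (H n) (List.IsSuffix.isInfix ⟨p, ?_⟩)
    rw [hx]; simp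
  have F2 : ∀ n, b :: (s ++ pw w n) ∈ L := by
    intro n
    refine hmemL (F0 (n+1)) (List.IsSuffix.isInfix ⟨e, ?_⟩)
    rw [pw_succ]
    calc e ++ b :: (s ++ pw w n) = (e ++ b :: s) ++ pw w n := by simp
    _ = w ++ pw w n := by rw [he]
  -- the transfer step
  have G3 : ∀ (c : A) (m : ℕ) (t : List A), c :: (s ++ pw w (m+1) ++ t) ∈ L →
      b :: (s ++ pw w m ++ t) ∈ L := by
    intro c m t hmem
    refine hmemL hmem (List.IsSuffix.isInfix ⟨c :: (s ++ e), ?_⟩)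
    rw [pw_succ]
    calc (c :: (s ++ e)) ++ b :: (s ++ pw w m ++ t)
        = c :: (s ++ ((e ++ b :: s) ++ (pw w m ++ t))) := by simp
    _ = c :: (s ++ (w ++ (pw w m ++ t))) := by rw [he]
    _ = c :: (s ++ (w ++ pw w m) ++ t) := by simp
  -- departure sets and stabilization
  set D : ℕ → ℕ → Set A := fun j m => {d | b :: (s ++ pw w m ++ (w.take j ++ [d])) ∈ L}
    with hD
  have hstab : ∀ j, ∃ N, ∀ m, N ≤ m → D j m = D j N := by
    intro j
    exact set_stab _ (fun m d hd => G3 b m _ hd)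
  choose N hN using hstab
  obtain ⟨M, hM1, hMj⟩ : ∃ M, 1 ≤ M ∧ ∀ j, j < w.length → N j + 1 ≤ M := by
    refine ⟨1 + (Finset.range w.length).sup N, by omega, fun j hj => ?_⟩
    have := Finset.le_sup (f := N) (Finset.mem_range.mpr hj)
    omega
  -- uniqueness of continuation after the `a`-branch
  have G4 : ∀ (j : ℕ) (hj : j < w.length) (m : ℕ), M ≤ m → ∀ d : A,
      a :: (s ++ pw w m ++ (w.take j ++ [d])) ∈ L → d = w[j]'hj := by
    intro j hj m hm d hmem
    have htake : (w.take j ++ [w[j]'hj]) <+: w := by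
      rw [← List.concat_eq_append, List.take_concat_get]
      exact List.take_prefix _ _
    obtain ⟨r, hr⟩ := htake
    have hr3 : w.take (j+1) ++ r = w := by
      rw [← List.concat_eq_append, List.take_concat_get] at hr; exact hr
    have hpref : ∀ (x : A) (n : ℕ), x :: (s ++ pw w n ++ (w.take j ++ [w[j]'hj])) <+:
        x :: (s ++ pw w (n+1)) := by
      intro x n
      refine ⟨r, ?_⟩
      rw [pw_succ']
      calc (x :: (s ++ pw w n ++ (w.take j ++ [w[j]'hj]))) ++ r
          = x :: (s ++ (pw w n ++ (w.take (j+1) ++ r))) := by simp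
      _ = x :: (s ++ (pw w n ++ w)) := by rw [hr3]
    have e1 : a :: (s ++ pw w m ++ (w.take j ++ [w[j]'hj])) ∈ L :=
      hmemL (F1 (m+1)) (hpref a m).isInfix
    have e2 : b :: (s ++ pw w m ++ (w.take j ++ [w[j]'hj])) ∈ L :=
      hmemL (F2 (m+1)) (hpref b m).isInfix
    have e4 : b :: (s ++ pw w m ++ (w.take j ++ [d])) ∈ L := by
      have hm1 : m - 1 + 1 = m := by omega
      have h' : d ∈ D j (m-1) := G3 a (m-1) _ (by rw [hm1]; exact hmem)
      have hNm : D j (m-1) = D j (N j) := hN j (m-1) (by have := hMj j hj; omega)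
      have hNm' : D j m = D j (N j) := hN j m (by have := hMj j hj; omega)
      have hdm : d ∈ D j m := by rw [hNm']; rw [hNm] at h'; exact h'
      exact hdm
    by_contra hdc
    exact four_edges hL hns (s ++ pw w m ++ w.take j) hab
      (fun h : w[j]'hj = d => hdc h.symm)
      (by simpa [List.append_assoc] using e1)
      (by simpa [List.append_assoc] using hmem)
      (by simpa [List.append_assoc] using e2)
      (by simpa [List.append_assoc] using e4)
  -- every continuation of the `a`-branch is a prefix of a power of w
  have Step3 : ∀ t : List A, (a :: (s ++ pw w M)) ++ t ∈ L → ∃ K, t <+: pw w K := by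
    intro t
    induction t using List.reverseRecOn with
    | nil => exact fun _ => ⟨0, by simp [pw_zero]⟩
    | append_singleton t' d ih =>
      intro hmem
      have hmem' : (a :: (s ++ pw w M)) ++ t' ∈ L :=
        hmemL hmem (List.IsPrefix.isInfix ⟨[d], by simp⟩)
      obtain ⟨K, hK⟩ := ih hmem'
      obtain ⟨Q, j, hj, rfl⟩ := prefix_pw hw K t' hK
      have hmem2 : a :: (s ++ pw w (M+Q) ++ (w.take j ++ [d])) ∈ L := by
        have heq : a :: (s ++ pw w (M+Q) ++ (w.take j ++ [d])) =
            (a :: (s ++ pw w M)) ++ ((pw w Q ++ w.take j) ++ [d]) := by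
          rw [pw_add]; simp
        rw [heq]; exact hmem
      have hd := G4 j hj (M+Q) (Nat.le_add_right M Q) d hmem2
      have htake : (w.take j ++ [w[j]'hj]) <+: w := by
        rw [← List.concat_eq_append, List.take_concat_get]
        exact List.take_prefix _ _
      obtain ⟨r, hr⟩ := htake
      have hr3 : w.take (j+1) ++ r = w := by
        rw [← List.concat_eq_append, List.take_concat_get] at hr; exact hr
      refine ⟨Q + 1, ⟨r, ?_⟩⟩
      rw [hd, pw_succ']
      calc (pw w Q ++ w.take j ++ [w[j]'hj]) ++ r
          = pw w Q ++ (w.take (j+1) ++ r) := by simp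
      _ = pw w Q ++ w := by rw [hr3]
  -- recurrence
  obtain ⟨u, hune, humem, husuf⟩ := hrec _ (F1 M)
  obtain ⟨K, huK⟩ := Step3 u humem
  obtain ⟨r, hr⟩ := huK
  obtain ⟨k', hk'⟩ : ∃ k', u.length = k' + 1 := by
    cases u with
    | nil => exact absurd rfl hune
    | cons c t => exact ⟨t.length, rfl⟩
  obtain ⟨y, ychar⟩ : ∃ y : ℕ → A, ∀ i : ℕ, w[i % w.length]? = some (y i) :=
    ⟨fun i => w[i % w.length]'(Nat.mod_lt i hwpos),
      fun i => List.getElem?_eq_getElem (Nat.mod_lt i hwpos)⟩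
  -- the big periodic word
  have hXbig : (e ++ [b]) ++ (((s ++ pw w M) ++ u) ++ r) = pw w (1 + M + K) := by
    calc (e ++ [b]) ++ (((s ++ pw w M) ++ u) ++ r)
        = (e ++ b :: s) ++ (pw w M ++ (u ++ r)) := by simp
    _ = w ++ (pw w M ++ pw w K) := by rw [he, hr]
    _ = pw w (1 + M + K) := by rw [pw_add, pw_add, pw_one, List.append_assoc]
  have hXlen : ((s ++ pw w M) ++ u).length = s.length + M * w.length + u.length := by
    simp [pw_length]; omega
  have hulen : u.length ≤ K * w.length := by
    have := congrArg List.length hr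
    simp [pw_length] at this
    omega
  have hXy : ∀ i, i < ((s ++ pw w M) ++ u).length →
      ((s ++ pw w M) ++ u)[i]? = some (y (e.length + 1 + i)) := by
    intro i hi
    have h1 : ((e ++ [b]) ++ (((s ++ pw w M) ++ u) ++ r))[e.length + 1 + i]? =
        (((s ++ pw w M) ++ u) ++ r)[e.length + 1 + i - (e ++ [b]).length]? :=
      List.getElem?_append_right (by simpa using Nat.le_add_right (e.length+1) i)
    have hidx : e.length + 1 + i - (e ++ [b]).length = i := by simp
    rw [hidx] at h1
    have h2 : (((s ++ pw w M) ++ u) ++ r)[i]? = ((s ++ pw w M) ++ u)[i]? :=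
      List.getElem?_append_left hi
    have h4 : e.length + 1 + i < (1 + M + K) * w.length := by
      have hlen2 := congrArg List.length hXbig
      simp [pw_length] at hlen2
      rw [hXlen] at hi
      omega
    have h5 := pw_getElem? hwpos (1+M+K) (e.length + 1 + i) h4
    rw [← h2, ← h1, hXbig, h5]
    exact ychar _
  -- the suffix occurrence
  obtain ⟨pre, hpre⟩ := husuf
  have hprelen : pre.length = u.length := by
    have := congrArg List.length hpre; simp at this; omega
  have l2 : (a :: (s ++ pw w M)) ++ u = a :: ((s ++ pw w M) ++ u) := by simp
  -- (i) the letter a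
  have hia : some a = some (y (e.length + 1 + k')) := by
    have l1 : (pre ++ (a :: (s ++ pw w M)))[pre.length]? = some a := by
      rw [List.getElem?_append_right (le_refl _)]
      simp
    rw [hpre, l2, hprelen, hk', List.getElem?_cons_succ] at l1
    rw [hXy k' (by rw [hXlen]; omega)] at l1
    exact l1.symm
  -- (ii) periodicity with gap k'+1
  have hii : ∀ i, i < s.length + M * w.length →
      y (e.length + 1 + (k' + 1 + i)) = y (e.length + 1 + i) := by
    intro i hi
    have l1 : (pre ++ (a :: (s ++ pw w M)))[pre.length + (1 + i)]? =
        (a :: (s ++ pw w M))[1 + i]? := by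
      rw [List.getElem?_append_right (Nat.le_add_right _ _), Nat.add_sub_cancel_left]
    have l2' : (a :: (s ++ pw w M))[1 + i]? = ((s ++ pw w M) ++ u)[i]? := by
      rw [Nat.add_comm 1 i, List.getElem?_cons_succ]
      exact (List.getElem?_append_left (by simp [pw_length]; omega)).symm
    have l3 : (pre ++ (a :: (s ++ pw w M)))[pre.length + (1 + i)]? =
        ((s ++ pw w M) ++ u)[k' + 1 + i]? := by
      rw [hpre, l2]
      have hidx2 : pre.length + (1 + i) = (k' + 1 + i) + 1 := by omega
      rw [hidx2, List.getElem?_cons_succ]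
    have e1 := (l1.symm.trans l3)
    rw [l2'] at e1
    rw [hXy i (by rw [hXlen]; omega), hXy (k' + 1 + i) (by rw [hXlen]; omega)] at e1
    exact (Option.some.inj e1).symm
  -- periodicity of y
  have hper : ∀ i, y (i + w.length) = y i := by
    intro i
    have h1 := ychar (i + w.length)
    rw [Nat.add_mod_right] at h1
    exact Option.some.inj (h1.symm.trans (ychar i))
  -- b is the letter at position e.length
  have hb : b = y e.length := by
    have h1 : w[e.length]? = some b := by
      rw [← he, List.getElem?_append_right (le_refl _)]
      simp
    have h2 := ychar e.length
    rw [Nat.mod_eq_of_lt (by omega)] at h2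
    exact Option.some.inj (h1.symm.trans h2)
  -- assemble the contradiction
  apply hab
  have m1 : a = y (e.length + 1 + k') := Option.some.inj hia
  obtain ⟨lw', hlw'⟩ : ∃ lw', w.length = lw' + 1 := ⟨w.length - 1, by omega⟩
  have hMlw : 1 * w.length ≤ M * w.length := Nat.mul_le_mul_right w.length hM1
  have m2 := hii lw' (by omega)
  have i1 : e.length + 1 + (k' + 1 + lw') = (e.length + 1 + k') + w.length := by omega
  have i2 : e.length + 1 + lw' = e.length + w.length := by omega
  rw [i1, hper] at m2
  rw [i2, hper] at m2
  rw [m1, m2]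
  exact hb.symm

lemma rev_lang {L : Set (List A)} (hL : IsLanguage L) :
    IsLanguage {l : List A | l.reverse ∈ L} := by
  refine ⟨?_, ?_, ?_⟩
  · intro wd hwd v hv
    exact hL.1 _ hwd _ (List.reverse_infix.mpr hv)
  · intro wd hwd
    obtain ⟨c, hc⟩ := hL.2.2 _ hwd
    refine ⟨c, ?_⟩
    show (c :: wd).reverse ∈ L
    simpa using hc
  · intro wd hwd
    obtain ⟨c, hc⟩ := hL.2.1 _ hwd
    refine ⟨c, ?_⟩
    show (wd ++ [c]).reverse ∈ L
    simpa using hc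

lemma rev_rec {L : Set (List A)} (hrec : LangRecurrent L) :
    LangRecurrent {l : List A | l.reverse ∈ L} := by
  intro v hv
  obtain ⟨u₀, hne, h1, h2⟩ := hrec v.reverse hv
  obtain ⟨pre, hpre⟩ := h2
  have hu0 : 0 < u₀.length := List.length_pos_iff.mpr hne
  have hprelen : pre.length = u₀.length := by
    have := congrArg List.length hpre; simp at this; omega
  refine ⟨pre.reverse, ?_, ?_, ?_⟩
  · simp only [ne_eq, List.reverse_eq_nil_iff]
    intro h
    rw [h] at hprelen
    simp at hprelen
    omega
  · show (v ++ pre.reverse).reverse ∈ L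
    rw [List.reverse_append, List.reverse_reverse, hpre]
    exact h1
  · have hp : v.reverse <+: (v ++ pre.reverse).reverse := by
      rw [List.reverse_append, List.reverse_reverse, hpre]
      exact List.prefix_append _ _
    exact List.reverse_prefix.mp hp

lemma rev_hns [Fintype A] {L : Set (List A)}
    (hns : ∀ v : List A, ¬ LocallyStrongBispecial L v) :
    ∀ v : List A, ¬ LocallyStrongBispecial {l : List A | l.reverse ∈ L} v := by
  intro v hv
  obtain ⟨⟨hA, hD⟩, A', D', hA'ne, hD'ne, hA's, hD's, hcard⟩ := hv
  have harr : arrSet {l : List A | l.reverse ∈ L} v = depSet L v.reverse := by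
    ext x; simp [arrSet, depSet]
  have hdep : depSet {l : List A | l.reverse ∈ L} v = arrSet L v.reverse := by
    ext x; simp [arrSet, depSet]
  apply hns v.reverse
  refine ⟨⟨by rw [← hdep]; exact hD, by rw [← harr]; exact hA⟩,
    D', A', hD'ne, hA'ne, by rw [← hdep]; exact hD's, by rw [← harr]; exact hA's, ?_⟩
  have hswap : {p : A × A | p.1 ∈ D' ∧ p.2 ∈ A' ∧ p.1 :: (v.reverse ++ [p.2]) ∈ L} =
      Prod.swap '' {p : A × A | p.1 ∈ A' ∧ p.2 ∈ D' ∧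
        p.1 :: (v ++ [p.2]) ∈ {l : List A | l.reverse ∈ L}} := by
    ext ⟨x, y⟩
    simp only [Set.mem_setOf_eq, Set.mem_image, Prod.exists]
    constructor
    · rintro ⟨hx, hy, hm⟩
      exact ⟨y, x, ⟨hy, hx, by simpa using hm⟩, rfl⟩
    · rintro ⟨y', x', ⟨hy', hx', hm⟩, hswapeq⟩
      have hxy : x' = x ∧ y' = y := by simpa [Prod.ext_iff] using hswapeq
      obtain ⟨rfl, rfl⟩ := hxy
      exact ⟨hx', hy', by simpa using hm⟩
  rw [hswap, Set.ncard_image_of_injective _ Prod.swap_injective]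
  omega

end Stmt7Aux

/-- in a recurrent language with no locally strong bispecial word,
if `w'wⁿ ∈ L` for all `n` (with `|w'| ≤ |w|`) then `w'` is a suffix of `w`, and
if `wⁿw' ∈ L` for all `n` then `w'` is a prefix of `w`. -/
theorem stmt7 [Fintype A] (L : Set (List A)) (hL : IsLanguage L)
    (hrec : LangRecurrent L)
    (hns : ∀ w : List A, ¬ LocallyStrongBispecial L w)
    (w w' : List A) (hw : w ≠ []) (hw' : w' ≠ []) (hlen : w'.length ≤ w.length) :
    ((∀ n : ℕ, w' ++ (List.replicate n w).flatten ∈ L) → w' <:+ w) ∧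
    ((∀ n : ℕ, (List.replicate n w).flatten ++ w' ∈ L) → w' <+: w) := by
  constructor
  · intro H
    exact Stmt7Aux.main_suffix L hL hrec hns w w' hw hlen (fun n => H n)
  · intro H
    have h1 := Stmt7Aux.rev_lang hL
    have h2 := Stmt7Aux.rev_rec hrec
    have h3 := Stmt7Aux.rev_hns hns
    have H' : ∀ n : ℕ, w'.reverse ++ Stmt7Aux.pw w.reverse n ∈ {l : List A | l.reverse ∈ L} := by
      intro n
      show (w'.reverse ++ Stmt7Aux.pw w.reverse n).reverse ∈ L
      rw [List.reverse_append, List.reverse_reverse, Stmt7Aux.pw_reverse]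
      exact H n
    have hs := Stmt7Aux.main_suffix _ h1 h2 h3 w.reverse w'.reverse
      (by simpa using hw) (by simpa using hlen) H'
    exact List.reverse_suffix.mp hs
end
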